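/- arXiv:2304.11806 — 4 statements merged into one kernel-verified Lean document; each statement's English description precedes it below -/
import Mathlib

section
/- Let (Q,d) be a compact separable metric space and let P(Q) denote the Borel probability measures on Q equipped with the Prohorov metric ρ and the corresponding Borel σ-algebra. Fix m ∈ ℕ and n_1,…,n_m ∈ ℕ, and for each i = 1,…,m let J_{n_i} : ℝ^{n_i} × P(Q) → ℝ be a function such that y_i ↦ J_{n_i}(y_i;P) is Borel measurable for each fixed P ∈ P(Q), and P ↦ J_{n_i}(y_i;P) is continuous on (P(Q),ρ) for each fixed y_i ∈ ℝ^{n_i}. Define J(y;P) = Σ_{i=1}^m J_{n_i}(y_i;P) for y = (y_1,…,y_m) ∈ ∏_{i=1}^m ℝ^{n_i}. Then there exists a Borel measurable function P̂ : ∏_{i=1}^m ℝ^{n_i} → P(Q) such that J(y;P̂(y)) = inf_{P ∈ P(Q)} J(y;P) for every y ∈ ∏_{i=1}^m ℝ^{n_i}. -/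
open MeasureTheory Filter Topology TopologicalSpace Set BoundedContinuousFunction
open scoped NNReal ENNReal


section ArgMin

variable {X S : Type*} [MeasurableSpace X] [MetricSpace S] [CompactSpace S]
  [SecondCountableTopology S] [Nonempty S] [MeasurableSpace S] [BorelSpace S]

/-- On a nonempty closed set in a compact metric space, a continuous function attains its
infimum over a given dense-in-`C` sequence. -/
private lemma inf_seq_eq_min {φ : S → ℝ} (hφ : Continuous φ) {C : Set S} (hC : IsClosed C)
    {v : ℕ → S} (hvC : ∀ i, v i ∈ C) (hv : ∀ s ∈ C, ∀ ε > (0:ℝ), ∃ i, dist s (v i) < ε)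
    {s0 : S} (hs0 : s0 ∈ C) (hmin : ∀ s ∈ C, φ s0 ≤ φ s) :
    (⨅ i, φ (v i)) = φ s0 := by
  have hbdd : BddBelow (Set.range fun i => φ (v i)) :=
    ⟨φ s0, by rintro _ ⟨i, rfl⟩; exact hmin _ (hvC i)⟩
  refine le_antisymm ?_ (le_ciInf fun i => hmin _ (hvC i))
  refine le_of_forall_pos_le_add fun ε hε => ?_
  obtain ⟨δ, hδpos, hδ⟩ := Metric.continuousAt_iff.mp (hφ.continuousAt (x := s0)) ε hε
  obtain ⟨i, hi⟩ := hv s0 hs0 δ hδpos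
  have : |φ (v i) - φ s0| < ε := by
    have := hδ (by rw [dist_comm] at hi; exact hi)
    simpa [Real.dist_eq] using this
  have h2 : φ (v i) < φ s0 + ε := by cases abs_lt.mp this; linarith
  exact (ciInf_le hbdd i).trans h2.le

/-- Measurable selection of a minimizer for a Carathéodory-type function on a compact
separable metric space. -/
theorem exists_measurable_argmin (F : X → S → ℝ)
    (hFm : ∀ s, Measurable fun x => F x s) (hFc : ∀ x, Continuous (F x)) :
    ∃ f : X → S, Measurable f ∧ ∀ x, F x (f x) = ⨅ s, F x s := by
  classical
  set u : ℕ → S := denseSeq S with hu_def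
  have hu : DenseRange u := denseRange_denseSeq S
  set g : X → ℝ := fun x => ⨅ i, F x (u i) with hg_def
  have hgm : Measurable g := Measurable.iInf fun i => hFm (u i)
  -- global minimum
  have hmin : ∀ x, ∃ s0, (∀ s, F x s0 ≤ F x s) ∧ g x = F x s0 := by
    intro x
    obtain ⟨s0, -, hs0⟩ := isCompact_univ.exists_isMinOn (univ_nonempty) (hFc x).continuousOn
    refine ⟨s0, fun s => hs0 (mem_univ s), ?_⟩
    exact inf_seq_eq_min (hFc x) isClosed_univ (fun i => mem_univ _)
      (fun s _ ε hε => hu.exists_dist_lt s hε) (mem_univ s0) (fun s _ => hs0 (mem_univ s))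
  have hg_le : ∀ x s, g x ≤ F x s := by
    intro x s
    obtain ⟨s0, h1, h2⟩ := hmin x
    rw [h2]; exact h1 s
  -- dense sequences in nonempty closed sets
  have hdense : ∀ (C : Set S), IsClosed C → C.Nonempty →
      ∃ v : ℕ → S, (∀ i, v i ∈ C) ∧ ∀ s ∈ C, ∀ ε > (0:ℝ), ∃ i, dist s (v i) < ε := by
    intro C hC hne
    haveI : Nonempty C := hne.to_subtype
    set v' : ℕ → C := denseSeq C
    have hv' : DenseRange v' := denseRange_denseSeq C
    refine ⟨fun i => (v' i : S), fun i => (v' i).2, fun s hs ε hε => ?_⟩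
    obtain ⟨i, hi⟩ := hv'.exists_dist_lt (⟨s, hs⟩ : C) hε
    exact ⟨i, by simpa [Subtype.dist_eq] using hi⟩
  -- minimum of F x over a nonempty closed set
  have hminC : ∀ x (C : Set S), IsClosed C → C.Nonempty →
      ∃ s0 ∈ C, ∀ s ∈ C, F x s0 ≤ F x s := by
    intro x C hC hne
    obtain ⟨s0, hs0C, hs0⟩ := (hC.isCompact).exists_isMinOn hne (hFc x).continuousOn
    exact ⟨s0, hs0C, fun s hs => hs0 hs⟩
  -- the key measurable predicate
  set Pred : X → Set S → Prop := fun x C => ∃ s ∈ C, F x s ≤ g x with hPred_def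
  have hPredMeas : ∀ (C : Set S), IsClosed C → MeasurableSet {x | Pred x C} := by
    intro C hC
    rcases C.eq_empty_or_nonempty with rfl | hne
    · simp [hPred_def]
    obtain ⟨v, hvC, hv⟩ := hdense C hC hne
    have : {x | Pred x C} = {x | (⨅ i, F x (v i)) ≤ g x} := by
      ext x
      obtain ⟨s0, hs0C, hs0⟩ := hminC x C hC hne
      have hEq : (⨅ i, F x (v i)) = F x s0 := inf_seq_eq_min (hFc x) hC hvC hv hs0C hs0
      simp only [Set.mem_setOf_eq]
      constructor
      · rintro ⟨s, hsC, hs⟩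
        rw [hEq]; exact (hs0 s hsC).trans hs
      · intro h
        exact ⟨s0, hs0C, by rw [← hEq]; exact h⟩
    rw [this]
    exact measurableSet_le (Measurable.iInf fun i => hFm (v i)) hgm
  -- the recursive scheme
  set r : ℕ → ℝ := fun n => (1/2 : ℝ) ^ n with hr_def
  have hrpos : ∀ n, 0 < r n := fun n => by positivity
  set B : ℕ → ℕ → Set S := fun n j => Metric.closedBall (u j) (r n) with hB_def
  set pk : X → ℕ → Set S → ℕ := fun x n C =>
    if h : ∃ j, Pred x (C ∩ B n j) then Nat.find h else 0 with hpk_def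
  set st : X → ℕ → Set S := fun x n =>
    Nat.rec Set.univ (fun n C => C ∩ B n (pk x n C)) n with hst_def
  have hst_succ : ∀ x n, st x (n+1) = st x n ∩ B n (pk x n (st x n)) := fun x n => rfl
  set idx : X → ℕ → ℕ := fun x n => pk x n (st x n) with hidx_def
  have hstClosed : ∀ x n, IsClosed (st x n) := by
    intro x n
    induction n with
    | zero => exact isClosed_univ
    | succ n ih => rw [hst_succ]; exact ih.inter Metric.isClosed_closedBall
  -- the invariant
  have hInv : ∀ x n, Pred x (st x n) := by
    intro x n
    induction n with
    | zero =>
      obtain ⟨s0, h1, h2⟩ := hmin x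
      exact ⟨s0, mem_univ _, le_of_eq h2.symm⟩
    | succ n ih =>
      obtain ⟨s, hsC, hs⟩ := ih
      obtain ⟨j, hj⟩ := hu.exists_dist_lt s (hrpos n)
      have hex : ∃ j, Pred x (st x n ∩ B n j) :=
        ⟨j, s, ⟨hsC, Metric.mem_closedBall.mpr hj.le⟩, hs⟩
      rw [hst_succ]
      have : pk x n (st x n) = Nat.find hex := by rw [hpk_def]; exact dif_pos hex
      rw [this]
      exact Nat.find_spec hex
  set p : X → ℕ → S := fun x n => u (idx x n) with hp_def
  have hst_sub : ∀ x n, st x (n+1) ⊆ B n (idx x n) := by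
    intro x n; rw [hst_succ]; exact inter_subset_right
  have hst_mono : ∀ x n m, n ≤ m → st x m ⊆ st x n := by
    intro x n m h
    induction m with
    | zero => simp_all
    | succ m ih =>
      rcases Nat.lt_or_ge n (m+1) with h' | h'
      · exact (hst_succ x m ▸ inter_subset_left).trans (ih (Nat.lt_succ_iff.mp h'))
      · have : n = m + 1 := le_antisymm h h'
        subst this; exact subset_rfl
  have hdist_p : ∀ x n (s : S), s ∈ st x (n+1) → dist (p x n) s ≤ r n := by
    intro x n s hs
    have := hst_sub x n hs
    rw [dist_comm]
    exact Metric.mem_closedBall.mp this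
  have hcauchy : ∀ x, CauchySeq (p x) := by
    intro x
    apply cauchySeq_of_le_geometric (1/2 : ℝ) 2 (by norm_num)
    intro n
    obtain ⟨s, hsC, -⟩ := hInv x (n+2)
    have h1 : dist (p x n) s ≤ r n := hdist_p x n s (hst_mono x (n+1) (n+2) (by omega) hsC)
    have h2 : dist (p x (n+1)) s ≤ r (n+1) := hdist_p x (n+1) s hsC
    have h3 : r (n+1) ≤ r n := by
      rw [hr_def]; apply pow_le_pow_of_le_one <;> norm_num
    calc dist (p x n) (p x (n+1)) ≤ dist (p x n) s + dist s (p x (n+1)) := dist_triangle _ _ _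
      _ ≤ r n + r n := by rw [dist_comm s]; linarith
      _ = 2 * (1/2)^n := by rw [hr_def]; ring
  set f : X → S := fun x => limUnder atTop (p x) with hf_def
  have hlim : ∀ x, Tendsto (p x) atTop (𝓝 (f x)) := fun x => (hcauchy x).tendsto_limUnder
  refine ⟨f, ?_, ?_⟩
  · -- measurability
    -- fibers of the index functions
    set D : (n : ℕ) → (Fin n → ℕ) → Set S := fun n v => ⋂ i : Fin n, B i (v i) with hD_def
    have hDclosed : ∀ n v, IsClosed (D n v) :=
      fun n v => isClosed_iInter fun i => Metric.isClosed_closedBall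
    have hDst : ∀ x n (v : Fin n → ℕ), (∀ i : Fin n, idx x (i : ℕ) = v i) →
        st x n = D n v := by
      intro x n
      induction n with
      | zero =>
        intro v _
        rw [show st x 0 = Set.univ from rfl]
        exact (iInter_of_empty _).symm
      | succ n ih =>
        intro v hv
        have h1 : st x n = D n (v ∘ Fin.castSucc) := by
          apply ih
          intro i
          simpa using hv i.castSucc
        have h2 : idx x n = v (Fin.last n) := by simpa using hv (Fin.last n)
        have h2' : pk x n (D n (v ∘ Fin.castSucc)) = v (Fin.last n) := by
          rw [← h1]; exact h2
        rw [hst_succ, h1, h2']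
        ext s
        simp only [hD_def, mem_iInter, mem_inter_iff, Fin.forall_fin_succ']
        constructor
        · rintro ⟨h3, h4⟩
          exact ⟨fun i => by simpa using h3 i, by simpa using h4⟩
        · rintro ⟨h3, h4⟩
          exact ⟨fun i => by simpa using h3 i, by simpa using h4⟩
    set A : (n : ℕ) → (Fin n → ℕ) → Set X := fun n v => {x | ∀ i : Fin n, idx x (i:ℕ) = v i}
      with hA_def
    have hpkD : ∀ n (v : Fin n → ℕ) (j : ℕ),
        MeasurableSet {x | pk x n (D n v) = j} := by
      intro n v j
      set T : ℕ → Set X := fun j' => {x | Pred x (D n v ∩ B n j')} with hT_def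
      have hTmeas : ∀ j', MeasurableSet (T j') :=
        fun j' => hPredMeas _ ((hDclosed n v).inter Metric.isClosed_closedBall)
      have key : {x | pk x n (D n v) = j} =
          (T j ∩ ⋂ (j' : ℕ) (_ : j' < j), (T j')ᶜ) ∪
          ((⋂ j' : ℕ, (T j')ᶜ) ∩ {_x : X | j = 0}) := by
        ext x
        by_cases hex : ∃ j', Pred x (D n v ∩ B n j')
        · have hpkx : pk x n (D n v) = Nat.find hex := by
            rw [hpk_def]; exact dif_pos hex
          simp only [mem_setOf_eq, mem_union, mem_inter_iff, mem_iInter, mem_compl_iff, hpkx,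
            hT_def]
          constructor
          · intro h
            rw [Nat.find_eq_iff hex] at h
            exact Or.inl ⟨h.1, fun j' hj' => h.2 j' hj'⟩
          · rintro (⟨h1, h2⟩ | ⟨h1, -⟩)
            · rw [Nat.find_eq_iff hex]; exact ⟨h1, fun j' hj' => h2 j' hj'⟩
            · exact absurd (Nat.find_spec hex) (h1 _)
        · have hpkx : pk x n (D n v) = 0 := by
            rw [hpk_def]; exact dif_neg hex
          push_neg at hex
          simp only [mem_setOf_eq, mem_union, mem_inter_iff, mem_iInter, mem_compl_iff, hpkx,
            hT_def]
          constructor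
          · intro h
            exact Or.inr ⟨fun j' => hex j', h.symm⟩
          · rintro (⟨h1, -⟩ | ⟨-, h2⟩)
            · exact absurd h1 (hex j)
            · exact h2.symm
      rw [key]
      apply MeasurableSet.union
      · exact (hTmeas j).inter (MeasurableSet.iInter fun j' =>
          MeasurableSet.iInter fun _ => (hTmeas j').compl)
      · exact (MeasurableSet.iInter fun j' => (hTmeas j').compl).inter
          (MeasurableSet.const _)
    have hAmeas : ∀ n v, MeasurableSet (A n v) := by
      intro n
      induction n with
      | zero =>
        intro v
        have : A 0 v = Set.univ := by
          ext x; simp [hA_def]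
        rw [this]; exact MeasurableSet.univ
      | succ n ih =>
        intro v
        have : A (n+1) v = A n (v ∘ Fin.castSucc) ∩
            (A n (v ∘ Fin.castSucc) ∩ {x | pk x n (D n (v ∘ Fin.castSucc)) = v (Fin.last n)}) := by
          ext x
          simp only [hA_def, mem_setOf_eq, mem_inter_iff, Fin.forall_fin_succ']
          constructor
          · rintro ⟨h1, h2⟩
            have h1' : ∀ i : Fin n, idx x (i:ℕ) = (v ∘ Fin.castSucc) i := by
              intro i; simpa using h1 i
            refine ⟨h1', h1', ?_⟩
            rw [← hDst x n _ h1']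
            exact h2
          · rintro ⟨h1, -, h2⟩
            refine ⟨fun i => by simpa using h1 i, ?_⟩
            rw [← hDst x n _ h1] at h2
            exact h2
        rw [this]
        exact (ih _).inter ((ih _).inter (hpkD n _ _))
      -- measurability of idx
    have hidxMeas : ∀ n, Measurable (fun x => idx x n) := by
      intro n
      apply measurable_to_countable'
      intro j
      have : (fun x => idx x n) ⁻¹' {j} = ⋃ v : Fin n → ℕ, A (n+1) (Fin.snoc v j) := by
        ext x
        simp only [mem_preimage, mem_singleton_iff, mem_iUnion]
        constructor
        · intro h
          refine ⟨fun i => idx x (i : ℕ), ?_⟩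
          intro i
          induction i using Fin.lastCases with
          | last => simpa [Fin.snoc_last] using h
          | cast i => simp [Fin.snoc_castSucc]
        · rintro ⟨v, hv⟩
          have := hv (Fin.last n)
          simpa [Fin.snoc_last] using this
      rw [this]
      exact MeasurableSet.iUnion fun v => hAmeas (n+1) _
    have hpMeas : ∀ n, Measurable (fun x => p x n) :=
      fun n => measurable_from_top.comp (hidxMeas n)
    exact measurable_of_tendsto_metrizable hpMeas (tendsto_pi_nhds.mpr hlim)
  · -- the value property
    intro x
    obtain ⟨s0, hs0min, hs0eq⟩ := hmin x
    have hFfx : F x (f x) = g x := by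
      -- approximating minimizers
      have hq : ∀ n, ∃ q, q ∈ st x (n+1) ∧ F x q ≤ g x := by
        intro n
        obtain ⟨q, hq1, hq2⟩ := hInv x (n+1)
        exact ⟨q, hq1, hq2⟩
      choose q hq1 hq2 using hq
      have hqlim : Tendsto q atTop (𝓝 (f x)) := by
        rw [tendsto_iff_dist_tendsto_zero]
        have hb : ∀ n, dist (q n) (f x) ≤ r n + dist (p x n) (f x) := by
          intro n
          calc dist (q n) (f x) ≤ dist (q n) (p x n) + dist (p x n) (f x) := dist_triangle _ _ _
            _ ≤ r n + dist (p x n) (f x) := by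
                have := hdist_p x n (q n) (hq1 n)
                rw [dist_comm] at this; linarith
        have h0 : Tendsto (fun n => r n + dist (p x n) (f x)) atTop (𝓝 0) := by
          have h1 : Tendsto r atTop (𝓝 0) := by
            rw [hr_def]
            exact tendsto_pow_atTop_nhds_zero_of_lt_one (by norm_num) (by norm_num)
          have h2 : Tendsto (fun n => dist (p x n) (f x)) atTop (𝓝 0) :=
            (tendsto_iff_dist_tendsto_zero).mp (hlim x)
          simpa using h1.add h2
        exact squeeze_zero (fun n => dist_nonneg) hb h0
      have hFlim : Tendsto (fun n => F x (q n)) atTop (𝓝 (F x (f x))) :=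
        ((hFc x).continuousAt.tendsto).comp hqlim
      have hle : F x (f x) ≤ g x := le_of_tendsto hFlim (Eventually.of_forall hq2)
      exact le_antisymm hle (hg_le x (f x))
    rw [hFfx, hs0eq]
    -- ⨅ s, F x s = F x s0
    refine le_antisymm (le_ciInf hs0min)
      (ciInf_le ⟨F x s0, by rintro _ ⟨s, rfl⟩; exact hs0min s⟩ s0)

end ArgMin


section Prokhorov

variable {Q : Type*} [MetricSpace Q] [CompactSpace Q] [Nonempty Q]
  [MeasurableSpace Q] [BorelSpace Q]

private lemma contMap_integrable (f : C(Q, ℝ)) (μ : Measure Q) [IsFiniteMeasure μ] :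
    Integrable (⇑f) μ := by
  have := BoundedContinuousFunction.integrable μ (mkOfCompact f)
  exact this

private lemma abs_integral_le (f : C(Q, ℝ)) (μ : Measure Q) [IsProbabilityMeasure μ] :
    |∫ x, f x ∂μ| ≤ ‖f‖ := by
  have := norm_integral_le_of_norm_le_const (μ := μ) (f := ⇑f) (C := ‖f‖)
    (Eventually.of_forall fun x => f.norm_coe_le_norm x)
  simpa [measure_univ] using this

/-- the ℝ-valued coercion of a bounded continuous `ℝ≥0`-valued function -/
private def toR (f : Q →ᵇ ℝ≥0) : C(Q, ℝ) :=
  ⟨fun x => (f x : ℝ), NNReal.continuous_coe.comp f.continuous⟩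

/-- Prokhorov-type sequential compactness: on a compact metric space, every sequence of
probability measures admits a weakly convergent subsequence. -/
theorem exists_tendsto_subseq_probabilityMeasure (μs : ℕ → ProbabilityMeasure Q) :
    ∃ (ν : ProbabilityMeasure Q) (φ : ℕ → ℕ), StrictMono φ ∧
      Tendsto (fun n => μs (φ n)) atTop (𝓝 ν) := by
  classical
  obtain ⟨ν, -, φ, hφ, h⟩ := (isCompact_univ (X := ProbabilityMeasure Q)).tendsto_subseq
    (x := μs) (fun n => mem_univ _)
  exact ⟨ν, φ, hφ, h⟩

end Prokhorov


section Bridge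

variable {Q : Type*} [MetricSpace Q] [CompactSpace Q] [Nonempty Q]
  [MeasurableSpace Q] [BorelSpace Q]

/-- Prokhorov's theorem (compact case): the Lévy-Prokhorov space of probability measures on a
compact metric space is compact. -/
lemma levyProkhorov_compactSpace :
    CompactSpace (LevyProkhorov (ProbabilityMeasure Q)) := by
  rw [compactSpace_iff_seqCompactSpace]
  refine ⟨fun x _ => ?_⟩
  obtain ⟨ν, φ, hφ, htend⟩ := exists_tendsto_subseq_probabilityMeasure
    (fun nn => (x nn).toMeasure)
  refine ⟨LevyProkhorov.probabilityMeasureHomeomorph (Ω := Q) ν, mem_univ _,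
    φ, hφ, ?_⟩
  have hcont := (LevyProkhorov.probabilityMeasureHomeomorph
    (Ω := Q)).continuous.tendsto ν
  exact hcont.comp htend

end Bridge

/-- Existence of a measurable least-squares estimator: let `(Q,d)` be a compact separable
metric space and `P(Q)` its Borel probability measures with the Prohorov metric.  For
`i = 1,…,m` let `J_i : ℝ^{n_i} × P(Q) → ℝ` be Borel measurable in the data for each fixed
measure and continuous in the measure for each fixed data vector.  Then there exists a Borel
measurable map `P̂` from `∏_{i=1}^m ℝ^{n_i}` into `P(Q)` such that for every data vector `y`,
`Σᵢ J_i(yᵢ; P̂(y)) = inf_{P ∈ P(Q)} Σᵢ J_i(yᵢ; P)`. -/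
theorem exists_measurable_least_squares_estimator
    {Q : Type*} [MetricSpace Q] [CompactSpace Q] [TopologicalSpace.SeparableSpace Q]
    [Nonempty Q] [MeasurableSpace Q] [BorelSpace Q]
    (m : ℕ) (n : Fin m → ℕ)
    (J : (i : Fin m) → (Fin (n i) → ℝ) → LevyProkhorov (ProbabilityMeasure Q) → ℝ)
    (hmeas : ∀ i (P : LevyProkhorov (ProbabilityMeasure Q)), Measurable fun y => J i y P)
    (hcont : ∀ i (y : Fin (n i) → ℝ), Continuous fun P => J i y P) :
    ∃ Phat : ((i : Fin m) → Fin (n i) → ℝ) → LevyProkhorov (ProbabilityMeasure Q),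
      @Measurable _ _ _ (borel (LevyProkhorov (ProbabilityMeasure Q))) Phat ∧
      ∀ y : (i : Fin m) → Fin (n i) → ℝ,
        (∑ i, J i (y i) (Phat y)) = ⨅ P : LevyProkhorov (ProbabilityMeasure Q),
          ∑ i, J i (y i) P := by
    classical
  haveI : CompactSpace (LevyProkhorov (ProbabilityMeasure Q)) := levyProkhorov_compactSpace
  haveI : Nonempty (ProbabilityMeasure Q) :=
    ⟨⟨Measure.dirac (Classical.arbitrary Q), Measure.dirac.isProbabilityMeasure⟩⟩
  haveI : Nonempty (LevyProkhorov (ProbabilityMeasure Q)) := ⟨LevyProkhorov.ofMeasure (Classical.arbitrary _)⟩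
  letI : MeasurableSpace (LevyProkhorov (ProbabilityMeasure Q)) :=
    borel (LevyProkhorov (ProbabilityMeasure Q))
  haveI : BorelSpace (LevyProkhorov (ProbabilityMeasure Q)) := ⟨rfl⟩
  obtain ⟨f, hfm, hfval⟩ := exists_measurable_argmin
    (fun (y : (i : Fin m) → Fin (n i) → ℝ) (P : LevyProkhorov (ProbabilityMeasure Q)) =>
      ∑ i, J i (y i) P)
    (fun P => Finset.measurable_sum _ fun i _ => (hmeas i P).comp (measurable_pi_apply i))
    (fun y => continuous_finset_sum _ fun i _ => hcont i (y i))
  exact ⟨f, hfm, hfval⟩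
end

section
/- Under setup S, for each fixed P ∈ P(Q) there exists an event A_P ∈ Σ_Ω with P_Ω(A_P) = 1 such that for every ω ∈ A_P, (1/(mn)) J_{n,m}(ω;P) → J_0(P) as n → ∞. -/
open MeasureTheory ProbabilityTheory Filter Topology

/-- The sampling times `t_k^n = k T / n`, viewed as points of `[0,T]`. -/
noncomputable def sampleTime (T : ℝ) (hT : 0 < T) (n k : ℕ) : Set.Icc (0 : ℝ) T :=
  Set.projIcc 0 T hT.le (k * T / n)

/-- The least-squares cost
`J_{n,m}(ω;P) = Σ_{i=1}^m Σ_{k=1}^n (Y_{k,i}^n(ω) − ȳ_i(P)(t_k^n))²`, where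
`Y_{k,i}^n(ω) = ȳ_i(P₀)(t_k^n) + e_{k,i}(ω)`. -/
noncomputable def lsCost {Q : Type*} [MetricSpace Q] [MeasurableSpace Q] {Ω : Type*}
    (m : ℕ) (T : ℝ) (hT : 0 < T)
    (ybar : Fin m → LevyProkhorov (ProbabilityMeasure Q) → C(Set.Icc (0 : ℝ) T, ℝ))
    (P₀ : LevyProkhorov (ProbabilityMeasure Q))
    (e : ℕ → Fin m → Ω → ℝ)
    (n : ℕ) (ω : Ω) (P : LevyProkhorov (ProbabilityMeasure Q)) : ℝ :=
  ∑ i : Fin m, ∑ k ∈ Finset.Icc 1 n,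
    ((ybar i P₀ (sampleTime T hT n k) + e k i ω) - ybar i P (sampleTime T hT n k)) ^ 2

/-- The limiting cost
`J₀(P) = σ² + (1/m) Σ_{i=1}^m ∫_0^T (ȳ_i(P₀)(t) − ȳ_i(P)(t))² dμ(t)`. -/
noncomputable def limCost {Q : Type*} [MetricSpace Q] [MeasurableSpace Q]
    (m : ℕ) (T : ℝ)
    (ybar : Fin m → LevyProkhorov (ProbabilityMeasure Q) → C(Set.Icc (0 : ℝ) T, ℝ))
    (P₀ : LevyProkhorov (ProbabilityMeasure Q))
    (σ : ℝ) (μ : Measure (Set.Icc (0 : ℝ) T))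
    (P : LevyProkhorov (ProbabilityMeasure Q)) : ℝ :=
  σ ^ 2 + (1 / (m : ℝ)) * ∑ i : Fin m, ∫ t, (ybar i P₀ t - ybar i P t) ^ 2 ∂μ

lemma sum_Icc_one_eq_range (F : ℕ → ℝ) (n : ℕ) :
    ∑ k ∈ Finset.Icc 1 n, F k = ∑ i ∈ Finset.range n, F (i + 1) := by
  rw [← Finset.Ico_add_one_right_eq_Icc, Finset.sum_Ico_eq_sum_range]
  simp [add_comm]

lemma slln_Icc {Ω : Type*} [MeasurableSpace Ω] (Pr : Measure Ω) [IsProbabilityMeasure Pr]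
    (X : ℕ → Ω → ℝ) (hint : Integrable (X 1) Pr)
    (hindep : ∀ k k', k ≠ k' → IndepFun (X k) (X k') Pr)
    (hident : ∀ k, IdentDistrib (X k) (X 1) Pr Pr) :
    ∀ᵐ ω ∂Pr, Tendsto (fun n : ℕ => (∑ k ∈ Finset.Icc 1 n, X k ω) / n) atTop
      (𝓝 (∫ ω, X 1 ω ∂Pr)) := by
  have h := strong_law_ae_real (μ := Pr) (fun k => X (k + 1)) hint
    (fun k k' hkk' => hindep _ _ (by omega)) (fun k => hident (k + 1))
  filter_upwards [h] with ω hω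
  have : (fun n : ℕ => (∑ k ∈ Finset.Icc 1 n, X k ω) / n)
      = fun n : ℕ => (∑ i ∈ Finset.range n, X (i + 1) ω) / n := by
    funext n; rw [sum_Icc_one_eq_range (fun k => X k ω) n]
  rw [this]; exact hω

lemma cutoff {S : ℕ → ℝ} (hS : Tendsto (fun N : ℕ => S N / N) atTop (𝓝 0))
    (hS0 : S 0 = 0) {j p : ℕ} (hp : 1 ≤ p) :
    Tendsto (fun n : ℕ => S (j * n / p) / n) atTop (𝓝 0) := by
  rcases Nat.eq_zero_or_pos j with hj | hj
  · simpa [hj, hS0] using (tendsto_const_nhds : Tendsto (fun _ : ℕ => (0:ℝ)) atTop (𝓝 0))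
  have hm : Tendsto (fun n : ℕ => j * n / p) atTop atTop := by
    apply tendsto_atTop.2; intro b
    filter_upwards [eventually_ge_atTop (b * p)] with n hn
    calc b ≤ n / p := (Nat.le_div_iff_mul_le (by omega)).2 hn
    _ ≤ j * n / p := Nat.div_le_div_right (by nlinarith)
  have h1 : Tendsto (fun n : ℕ => S (j * n / p) / (j * n / p : ℕ)) atTop (𝓝 0) := hS.comp hm
  have h2 : Tendsto (fun n : ℕ => (j : ℝ) * |S (j * n / p) / (j * n / p : ℕ)|) atTop (𝓝 0) := by
    simpa using (h1.abs.const_mul (j : ℝ))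
  apply squeeze_zero_norm' _ h2
  filter_upwards [eventually_ge_atTop p] with n hn
  set q := j * n / p with hq
  have hq1 : 1 ≤ q := by
    calc 1 ≤ n / p := (Nat.le_div_iff_mul_le (by omega)).2 (by omega)
    _ ≤ q := Nat.div_le_div_right (by nlinarith)
  have hqn : (q : ℝ) ≤ (j : ℝ) * n := by exact_mod_cast (Nat.div_le_self _ _ : j * n / p ≤ j * n)
  have hn0 : (0:ℝ) < n := by exact_mod_cast (by omega : 0 < n)
  have hq0 : (0:ℝ) < q := by exact_mod_cast hq1
  rw [Real.norm_eq_abs, abs_div, abs_div, Nat.abs_cast, Nat.abs_cast, ← mul_div_assoc,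
    div_le_div_iff₀ hn0 hq0]
  nlinarith [abs_nonneg (S q)]

lemma sum_blocks (F : ℕ → ℝ) (c : ℕ → ℕ) (hc : Monotone c) :
    ∀ p : ℕ, ∑ j ∈ Finset.Icc 1 p, ∑ k ∈ Finset.Ioc (c (j - 1)) (c j), F k
      = ∑ k ∈ Finset.Ioc (c 0) (c p), F k := by
  intro p; induction p with
  | zero => simp
  | succ p ih =>
    rw [Finset.sum_Icc_succ_top (by omega), ih]
    simpa using Finset.sum_Ioc_consecutive F (hc (Nat.zero_le p)) (hc (Nat.le_succ p))

lemma cross_ae {Ω : Type*} [MeasurableSpace Ω] (Pr : Measure Ω) [IsProbabilityMeasure Pr]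
    {T : ℝ} (hT : 0 < T) (f : C(Set.Icc (0:ℝ) T, ℝ)) (X : ℕ → Ω → ℝ)
    (hint : Integrable (X 1) Pr)
    (hindep : ∀ k k', k ≠ k' → IndepFun (X k) (X k') Pr)
    (hident : ∀ k, IdentDistrib (X k) (X 1) Pr Pr)
    (hmean : ∫ ω, X 1 ω ∂Pr = 0) :
    ∀ᵐ ω ∂Pr, Tendsto
      (fun n : ℕ => (∑ k ∈ Finset.Icc 1 n, f (sampleTime T hT n k) * X k ω) / n)
      atTop (𝓝 0) := by
  have habs := slln_Icc Pr (fun k ω => |X k ω|) hint.abs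
    (fun k k' h => (hindep k k' h).comp measurable_abs measurable_abs)
    (fun k => (hident k).comp measurable_abs)
  have h0 := slln_Icc Pr X hint hindep hident
  rw [hmean] at h0
  filter_upwards [h0, habs] with ω hω0 hωabs
  set M0 : ℝ := ∫ ω', |X 1 ω'| ∂Pr with hM0def
  have hM0 : 0 ≤ M0 := integral_nonneg fun ω' => abs_nonneg _
  set M : ℝ := M0 + 1 with hMdef
  have hM : 0 < M := by linarith
  set S : ℕ → ℝ := fun N => ∑ k ∈ Finset.Icc 1 N, X k ω with hSdef
  have hIoc : ∀ N : ℕ, Finset.Icc 1 N = Finset.Ioc 0 N := by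
    intro N; ext x; simp; omega
  rw [NormedAddCommGroup.tendsto_nhds_zero]
  intro ε hε
  set ε' : ℝ := ε / (4 * M) with hε'def
  have hε' : 0 < ε' := by positivity
  obtain ⟨δ, hδ, Hδ⟩ := Metric.uniformContinuous_iff.1
    (CompactSpace.uniformContinuous_of_continuous f.continuous) ε' hε'
  obtain ⟨p₀, hp₀⟩ := exists_nat_gt (T / δ)
  set p : ℕ := p₀ + 1 with hpdef
  have hp : 1 ≤ p := by omega
  have hppos : (0:ℝ) < p := by positivity
  have hTp : T / p < δ := by
    rw [div_lt_iff₀ hppos]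
    have h' : T / δ < (p:ℝ) := by
      refine lt_of_lt_of_le hp₀ ?_
      exact_mod_cast Nat.le_succ p₀
    calc T = (T / δ) * δ := by field_simp
    _ < δ * p := by nlinarith
  -- pointwise closeness of f on blocks
  have hkey : ∀ n : ℕ, ∀ j ∈ Finset.Icc 1 p,
      ∀ k ∈ Finset.Ioc ((j - 1) * n / p) (j * n / p),
      |f (sampleTime T hT n k) - f (sampleTime T hT p j)| ≤ ε' := by
    intro n j hj k hk
    rw [Finset.mem_Icc] at hj
    rw [Finset.mem_Ioc] at hk
    have hk1 : 0 < k := lt_of_le_of_lt (Nat.zero_le _) hk.1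
    have hkn : k ≤ n := by
      refine le_trans hk.2 ?_
      calc j * n / p ≤ p * n / p := Nat.div_le_div_right (by nlinarith)
      _ = n := Nat.mul_div_cancel_left _ (by omega)
    have hn0 : 0 < n := by omega
    have h1 : k * p ≤ j * n := (Nat.le_div_iff_mul_le (by omega)).1 hk.2
    have h2 : (j - 1) * n < k * p := (Nat.div_lt_iff_lt_mul (by omega)).1 hk.1
    have hr1 : (k:ℝ) * p ≤ (j:ℝ) * n := by exact_mod_cast h1
    have hr2 : ((j:ℝ) - 1) * n < (k:ℝ) * p := by
      have h2' : ((j - 1 : ℕ):ℝ) * n < (k:ℝ) * p := by exact_mod_cast h2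
      rwa [Nat.cast_sub hj.1, Nat.cast_one] at h2'
    have hn0' : (0:ℝ) < n := by exact_mod_cast hn0
    have hdist : dist (sampleTime T hT n k) (sampleTime T hT p j) < δ := by
      have hl : dist (sampleTime T hT n k) (sampleTime T hT p j)
          ≤ dist ((k:ℝ) * T / n) ((j:ℝ) * T / p) := by
        simpa [sampleTime] using
          (LipschitzWith.projIcc (a := (0:ℝ)) (b := T) hT.le).dist_le_mul
            ((k:ℝ) * T / n) ((j:ℝ) * T / p)
      refine lt_of_le_of_lt hl ?_
      rw [Real.dist_eq, abs_sub_lt_iff]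
      have hle : (k:ℝ) * T / n ≤ (j:ℝ) * T / p := by
        rw [div_le_div_iff₀ hn0' hppos]; nlinarith
      have hgt : ((j:ℝ) - 1) * T / p < (k:ℝ) * T / n := by
        rw [div_lt_div_iff₀ hppos hn0']; nlinarith
      have hTP : (j:ℝ) * T / p - ((j:ℝ) - 1) * T / p = T / p := by
        field_simp; ring
      constructor <;> linarith
    have := Hδ hdist
    rw [Real.dist_eq] at this
    exact this.le
  set v : ℕ → ℝ := fun n =>
    (∑ j ∈ Finset.Icc 1 p, f (sampleTime T hT p j)
      * (S (j * n / p) - S ((j - 1) * n / p))) / n with hvdef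
  have hterm : ∀ j : ℕ, Tendsto (fun n : ℕ => S (j * n / p) / n) atTop (𝓝 0) :=
    fun j => cutoff hω0 (by simp [hSdef]) hp
  have hv : Tendsto v atTop (𝓝 0) := by
    have hveq : v = fun n : ℕ => ∑ j ∈ Finset.Icc 1 p,
        f (sampleTime T hT p j) * (S (j * n / p) / n - S ((j - 1) * n / p) / n) := by
      funext n; rw [hvdef]; dsimp only; rw [Finset.sum_div]
      exact Finset.sum_congr rfl fun j _ => by rw [mul_div_assoc, sub_div]
    rw [hveq]
    have h := tendsto_finset_sum (Finset.Icc 1 p) (fun j (_ : j ∈ Finset.Icc 1 p) =>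
      (((hterm j).sub (hterm (j - 1))).const_mul (f (sampleTime T hT p j))))
    simpa using h
  have hw : ∀ n : ℕ,
      ‖(∑ k ∈ Finset.Icc 1 n, f (sampleTime T hT n k) * X k ω) / n - v n‖
        ≤ ε' * ((∑ k ∈ Finset.Icc 1 n, |X k ω|) / n) := by
    intro n
    set c : ℕ → ℕ := fun j => j * n / p with hcdef
    have hc : Monotone c := fun a b hab => Nat.div_le_div_right (Nat.mul_le_mul_right n hab)
    have hc0 : c 0 = 0 := by simp [hcdef]
    have hcp : c p = n := Nat.mul_div_cancel_left _ (by omega)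
    have hdecomp : ∀ F : ℕ → ℝ, ∑ k ∈ Finset.Icc 1 n, F k
        = ∑ j ∈ Finset.Icc 1 p, ∑ k ∈ Finset.Ioc (c (j - 1)) (c j), F k := by
      intro F
      rw [sum_blocks F c hc p, hc0, hcp, hIoc n]
    have hSdiff : ∀ j, S (c j) - S (c (j - 1)) = ∑ k ∈ Finset.Ioc (c (j - 1)) (c j), X k ω := by
      intro j
      have h := Finset.sum_Ioc_consecutive (fun k => X k ω)
        (Nat.zero_le (c (j - 1))) (hc (by omega : j - 1 ≤ j))
      have hS' : ∀ N, S N = ∑ k ∈ Finset.Ioc 0 N, X k ω := by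
        intro N; rw [hSdef]; dsimp only; rw [hIoc N]
      rw [hS', hS']
      linarith [h]
    have huv : (∑ k ∈ Finset.Icc 1 n, f (sampleTime T hT n k) * X k ω) / n - v n
        = (∑ j ∈ Finset.Icc 1 p, ∑ k ∈ Finset.Ioc (c (j - 1)) (c j),
            (f (sampleTime T hT n k) - f (sampleTime T hT p j)) * X k ω) / n := by
      rw [hvdef]; dsimp only; rw [div_sub_div_same]
      congr 1
      rw [hdecomp (fun k => f (sampleTime T hT n k) * X k ω), ← Finset.sum_sub_distrib]
      refine Finset.sum_congr rfl fun j hj => ?_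
      rw [hSdiff j, Finset.mul_sum, ← Finset.sum_sub_distrib]
      exact Finset.sum_congr rfl fun k hk => by ring
    rw [huv]
    rcases Nat.eq_zero_or_pos n with hn | hn
    · simp [hn]
    have hn0' : (0:ℝ) < n := by exact_mod_cast hn
    have hb : ‖∑ j ∈ Finset.Icc 1 p, ∑ k ∈ Finset.Ioc (c (j - 1)) (c j),
        (f (sampleTime T hT n k) - f (sampleTime T hT p j)) * X k ω‖
        ≤ ε' * ∑ k ∈ Finset.Icc 1 n, |X k ω| := by
      calc ‖∑ j ∈ Finset.Icc 1 p, ∑ k ∈ Finset.Ioc (c (j - 1)) (c j),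
          (f (sampleTime T hT n k) - f (sampleTime T hT p j)) * X k ω‖
          ≤ ∑ j ∈ Finset.Icc 1 p, ∑ k ∈ Finset.Ioc (c (j - 1)) (c j),
            ‖(f (sampleTime T hT n k) - f (sampleTime T hT p j)) * X k ω‖ := by
            refine le_trans (norm_sum_le _ _) ?_
            exact Finset.sum_le_sum fun j _ => norm_sum_le _ _
      _ ≤ ∑ j ∈ Finset.Icc 1 p, ∑ k ∈ Finset.Ioc (c (j - 1)) (c j), ε' * |X k ω| := by
            refine Finset.sum_le_sum fun j hj => Finset.sum_le_sum fun k hk => ?_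
            rw [Real.norm_eq_abs, abs_mul]
            exact mul_le_mul_of_nonneg_right (hkey n j hj k hk) (abs_nonneg _)
      _ = ε' * ∑ k ∈ Finset.Icc 1 n, |X k ω| := by
            rw [hdecomp (fun k => |X k ω|), Finset.mul_sum]
            exact Finset.sum_congr rfl fun j _ => by rw [Finset.mul_sum]
    rw [norm_div, Real.norm_natCast, ← mul_div_assoc]
    gcongr
  have h2 : ∀ᶠ n : ℕ in atTop, (∑ k ∈ Finset.Icc 1 n, |X k ω|) / n < M :=
    hωabs.eventually_lt_const (by linarith : M0 < M)
  have h1 : ∀ᶠ n : ℕ in atTop, ‖v n‖ < ε / 2 :=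
    (NormedAddCommGroup.tendsto_nhds_zero.1 hv) (ε / 2) (by linarith)
  filter_upwards [h1, h2] with n hn1 hn2
  clear_value M0 M S ε' v
  have hq : 0 ≤ (∑ k ∈ Finset.Icc 1 n, |X k ω|) / n := by positivity
  have hεM : ε' * M = ε / 4 := by
    rw [hε'def, div_mul_eq_mul_div, mul_comm (4:ℝ) M, ← div_div, mul_div_assoc,
      div_self hM.ne', mul_one]
  calc ‖(∑ k ∈ Finset.Icc 1 n, f (sampleTime T hT n k) * X k ω) / n‖
      ≤ ‖(∑ k ∈ Finset.Icc 1 n, f (sampleTime T hT n k) * X k ω) / n - v n‖ + ‖v n‖ := by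
        have h := norm_add_le
          ((∑ k ∈ Finset.Icc 1 n, f (sampleTime T hT n k) * X k ω) / n - v n) (v n)
        rwa [sub_add_cancel] at h
  _ ≤ ε' * ((∑ k ∈ Finset.Icc 1 n, |X k ω|) / n) + ‖v n‖ :=
        add_le_add_left (hw n) _
  _ ≤ ε' * M + ‖v n‖ :=
        add_le_add_left (mul_le_mul_of_nonneg_left hn2.le hε'.le) _
  _ < ε := by linarith

/-- Under setup S, for each fixed probability measure `P` on `Q` there is an almost-sure
event on which `(1/(mn)) J_{n,m}(ω;P) → J₀(P)` as `n → ∞`. -/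
theorem normalized_cost_tendsto_ae
    {Q : Type*} [MetricSpace Q] [CompactSpace Q] [TopologicalSpace.SeparableSpace Q]
    [MeasurableSpace Q] [BorelSpace Q]
    {Ω : Type*} [MeasurableSpace Ω] (Pr : Measure Ω) [IsProbabilityMeasure Pr]
    (m : ℕ) (hm : 0 < m) (T : ℝ) (hT : 0 < T)
    (e : ℕ → Fin m → Ω → ℝ) (σ : ℝ)
    (hmeas : ∀ k i, Measurable (e k i))
    (hindep : iIndepFun (fun p : ℕ × Fin m => e p.1 p.2) Pr)
    (hident : ∀ k i k' i', IdentDistrib (e k i) (e k' i') Pr Pr)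
    (hL2 : ∀ k i, MemLp (e k i) 2 Pr)
    (hmean : ∀ k i, ∫ ω, e k i ω ∂Pr = 0)
    (hvar : ∀ k i, variance (e k i) Pr = σ ^ 2)
    (ybar : Fin m → LevyProkhorov (ProbabilityMeasure Q) → C(Set.Icc (0 : ℝ) T, ℝ))
    (hybar : ∀ i, Continuous (ybar i))
    (μ : Measure (Set.Icc (0 : ℝ) T)) [IsFiniteMeasure μ]
    (hμ : ∀ f : C(Set.Icc (0 : ℝ) T, ℝ),
      Tendsto (fun n : ℕ => (1 / (n : ℝ)) * ∑ k ∈ Finset.Icc 1 n, f (sampleTime T hT n k))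
        atTop (nhds (∫ t, f t ∂μ)))
    (P₀ : LevyProkhorov (ProbabilityMeasure Q))
    (P : LevyProkhorov (ProbabilityMeasure Q)) :
    ∃ A : Set Ω, MeasurableSet A ∧ Pr A = 1 ∧ ∀ ω ∈ A,
      Tendsto (fun n : ℕ => (1 / ((m : ℝ) * n)) * lsCost m T hT ybar P₀ e n ω P)
        atTop (nhds (limCost m T ybar P₀ σ μ P)) := by
  have hm' : (m : ℝ) ≠ 0 := Nat.cast_ne_zero.2 hm.ne'
  set g : Fin m → C(Set.Icc (0:ℝ) T, ℝ) := fun i => ybar i P₀ - ybar i P with hgdef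
  have hA : ∀ i : Fin m, Tendsto (fun n : ℕ =>
      (∑ k ∈ Finset.Icc 1 n, (g i (sampleTime T hT n k)) ^ 2) / n) atTop
      (𝓝 (∫ t, (g i t) ^ 2 ∂μ)) := by
    intro i
    have h := hμ ((g i) ^ 2)
    simp only [ContinuousMap.pow_apply, one_div, inv_mul_eq_div] at h
    exact h
  have hB : ∀ i : Fin m, ∀ᵐ ω ∂Pr, Tendsto (fun n : ℕ =>
      (∑ k ∈ Finset.Icc 1 n, g i (sampleTime T hT n k) * e k i ω) / n) atTop (𝓝 0) := by
    intro i
    exact cross_ae Pr hT (g i) (fun k => e k i)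
      ((hL2 1 i).integrable one_le_two)
      (fun k k' h => hindep.indepFun (show (⟨k, i⟩ : ℕ × Fin m) ≠ ⟨k', i⟩ by simp [h]))
      (fun k => hident k i 1 i)
      (hmean 1 i)
  have hsqmeas : Measurable fun x : ℝ => x ^ 2 := measurable_id.pow_const 2
  have hC : ∀ i : Fin m, ∀ᵐ ω ∂Pr, Tendsto (fun n : ℕ =>
      (∑ k ∈ Finset.Icc 1 n, (e k i ω) ^ 2) / n) atTop (𝓝 (σ ^ 2)) := by
    intro i
    have h := slln_Icc Pr (fun k ω => (e k i ω) ^ 2) (hL2 1 i).integrable_sq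
      (fun k k' h => (hindep.indepFun
        (show (⟨k, i⟩ : ℕ × Fin m) ≠ ⟨k', i⟩ by simp [h])).comp hsqmeas hsqmeas)
      (fun k => (hident k i 1 i).comp hsqmeas)
    have hval : ∫ ω, (e 1 i ω) ^ 2 ∂Pr = σ ^ 2 := by
      have hv := variance_eq_sub (hL2 1 i)
      rw [hvar 1 i, hmean 1 i] at hv
      simp only [Pi.pow_apply] at hv
      simp at hv
      linarith
    rw [hval] at h
    exact h
  have hae : ∀ᵐ ω ∂Pr, ∀ i : Fin m,
      (Tendsto (fun n : ℕ =>
        (∑ k ∈ Finset.Icc 1 n, g i (sampleTime T hT n k) * e k i ω) / n) atTop (𝓝 0)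
      ∧ Tendsto (fun n : ℕ =>
        (∑ k ∈ Finset.Icc 1 n, (e k i ω) ^ 2) / n) atTop (𝓝 (σ ^ 2))) :=
    ae_all_iff.2 fun i => (hB i).and (hC i)
  obtain ⟨B, hBsub, hBmeas, hB0⟩ := exists_measurable_superset_of_null (ae_iff.1 hae)
  refine ⟨Bᶜ, hBmeas.compl, ?_, ?_⟩
  · rw [measure_compl hBmeas (measure_ne_top _ _), hB0, measure_univ]
    simp
  intro ω hω
  have hΦ : ∀ i : Fin m,
      (Tendsto (fun n : ℕ =>
        (∑ k ∈ Finset.Icc 1 n, g i (sampleTime T hT n k) * e k i ω) / n) atTop (𝓝 0)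
      ∧ Tendsto (fun n : ℕ =>
        (∑ k ∈ Finset.Icc 1 n, (e k i ω) ^ 2) / n) atTop (𝓝 (σ ^ 2))) :=
    of_not_not (fun h => hω (hBsub h))
  have key : ∀ i : Fin m, Tendsto (fun n : ℕ =>
      (∑ k ∈ Finset.Icc 1 n, ((ybar i P₀ (sampleTime T hT n k) + e k i ω)
        - ybar i P (sampleTime T hT n k)) ^ 2) / n) atTop
      (𝓝 (∫ t, (g i t) ^ 2 ∂μ + σ ^ 2)) := by
    intro i
    obtain ⟨hBi, hCi⟩ := hΦ i
    have hexp : (fun n : ℕ => (∑ k ∈ Finset.Icc 1 n,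
        ((ybar i P₀ (sampleTime T hT n k) + e k i ω)
          - ybar i P (sampleTime T hT n k)) ^ 2) / n)
        = fun n : ℕ => ((∑ k ∈ Finset.Icc 1 n, (g i (sampleTime T hT n k)) ^ 2) / n
          + 2 * ((∑ k ∈ Finset.Icc 1 n, g i (sampleTime T hT n k) * e k i ω) / n)
          + (∑ k ∈ Finset.Icc 1 n, (e k i ω) ^ 2) / n) := by
      funext n
      have hsum : ∑ k ∈ Finset.Icc 1 n, ((ybar i P₀ (sampleTime T hT n k) + e k i ω)
          - ybar i P (sampleTime T hT n k)) ^ 2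
          = ∑ k ∈ Finset.Icc 1 n, (g i (sampleTime T hT n k)) ^ 2
            + 2 * ∑ k ∈ Finset.Icc 1 n, g i (sampleTime T hT n k) * e k i ω
            + ∑ k ∈ Finset.Icc 1 n, (e k i ω) ^ 2 := by
        rw [Finset.mul_sum, ← Finset.sum_add_distrib, ← Finset.sum_add_distrib]
        refine Finset.sum_congr rfl fun k _ => ?_
        simp only [hgdef, ContinuousMap.sub_apply]
        ring
      rw [hsum, add_div, add_div, mul_div_assoc]
    rw [hexp]
    have h := ((hA i).add (hBi.const_mul 2)).add hCi
    simpa using h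
  have hfinal := (tendsto_finset_sum Finset.univ
    (fun i (_ : i ∈ Finset.univ) => key i)).const_mul (1 / (m : ℝ))
  have hfun : (fun n : ℕ => (1 / ((m : ℝ) * n)) * lsCost m T hT ybar P₀ e n ω P)
      = fun n : ℕ => (1 / (m : ℝ)) * ∑ i : Fin m,
        (∑ k ∈ Finset.Icc 1 n, ((ybar i P₀ (sampleTime T hT n k) + e k i ω)
          - ybar i P (sampleTime T hT n k)) ^ 2) / n := by
    funext n
    rw [lsCost, Finset.mul_sum, Finset.mul_sum]
    refine Finset.sum_congr rfl fun i _ => ?_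
    rw [← one_div_mul_one_div, mul_assoc, one_div (n : ℝ), inv_mul_eq_div]
  have hlim : limCost m T ybar P₀ σ μ P
      = (1 / (m : ℝ)) * ∑ i : Fin m, (∫ t, (g i t) ^ 2 ∂μ + σ ^ 2) := by
    simp only [hgdef, ContinuousMap.sub_apply]
    rw [limCost, Finset.sum_add_distrib, Finset.sum_const, Finset.card_univ,
      Fintype.card_fin, nsmul_eq_mul, mul_add]
    field_simp
    ring
  rw [hfun, hlim]
  exact hfinal
end

section
/- Under setup S, there exists an event A ∈ Σ_Ω with P_Ω(A) = 1 such that for every ω ∈ A the following equicontinuity holds: for every ε > 0 and every P ∈ P(Q) there exist δ > 0 and N_0 ∈ ℕ such that for all n ≥ N_0 and all P̃ ∈ P(Q) with ρ(P,P̃) < δ, one has |(1/(mn)) J_{n,m}(ω;P) − (1/(mn)) J_{n,m}(ω;P̃)| < ε. -/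
open MeasureTheory ProbabilityTheory Filter

/-- Under setup S, there is an almost-sure event on which the family of normalized costs
`P ↦ (1/(mn)) J_{n,m}(ω;P)`, `n ∈ ℕ`, is equicontinuous in the sense that for every `ε > 0`
and every `P` there are `δ > 0` and `N₀` such that for all `n ≥ N₀` and all `P'` with
`ρ(P,P') < δ` the normalized costs at `P` and `P'` differ by less than `ε`. -/
theorem normalized_cost_equicontinuous_ae
    {Q : Type*} [MetricSpace Q] [CompactSpace Q] [TopologicalSpace.SeparableSpace Q]
    [MeasurableSpace Q] [BorelSpace Q]
    {Ω : Type*} [MeasurableSpace Ω] (Pr : Measure Ω) [IsProbabilityMeasure Pr]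
    (m : ℕ) (hm : 0 < m) (T : ℝ) (hT : 0 < T)
    (e : ℕ → Fin m → Ω → ℝ) (σ : ℝ)
    (hmeas : ∀ k i, Measurable (e k i))
    (hindep : iIndepFun (fun p : ℕ × Fin m => e p.1 p.2) Pr)
    (hident : ∀ k i k' i', IdentDistrib (e k i) (e k' i') Pr Pr)
    (hL2 : ∀ k i, MemLp (e k i) 2 Pr)
    (hmean : ∀ k i, ∫ ω, e k i ω ∂Pr = 0)
    (hvar : ∀ k i, variance (e k i) Pr = σ ^ 2)
    (ybar : Fin m → LevyProkhorov (ProbabilityMeasure Q) → C(Set.Icc (0 : ℝ) T, ℝ))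
    (hybar : ∀ i, Continuous (ybar i))
    (μ : Measure (Set.Icc (0 : ℝ) T)) [IsFiniteMeasure μ]
    (hμ : ∀ f : C(Set.Icc (0 : ℝ) T, ℝ),
      Tendsto (fun n : ℕ => (1 / (n : ℝ)) * ∑ k ∈ Finset.Icc 1 n, f (sampleTime T hT n k))
        atTop (nhds (∫ t, f t ∂μ)))
    (P₀ : LevyProkhorov (ProbabilityMeasure Q))
    :
    ∃ A : Set Ω, MeasurableSet A ∧ Pr A = 1 ∧ ∀ ω ∈ A,
      ∀ ε > (0 : ℝ), ∀ P : LevyProkhorov (ProbabilityMeasure Q),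
        ∃ δ > (0 : ℝ), ∃ N₀ : ℕ, ∀ n ≥ N₀, ∀ P' : LevyProkhorov (ProbabilityMeasure Q),
          dist P P' < δ →
            |(1 / ((m : ℝ) * n)) * lsCost m T hT ybar P₀ e n ω P
              - (1 / ((m : ℝ) * n)) * lsCost m T hT ybar P₀ e n ω P'| < ε := by
  
  classical
  set φ : Ω → Prop := fun ω => ∀ i : Fin m, ∃ C : ℝ, 0 ≤ C ∧ ∃ N : ℕ, ∀ n ≥ N,
      (∑ k ∈ Finset.Icc 1 n, |e k i ω|) ≤ n * C with hφdef
  have hAE : ∀ᵐ ω ∂Pr, φ ω := by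
    rw [ae_all_iff]
    intro i
    set X : ℕ → Ω → ℝ := fun j ω => |e (j + 1) i ω| with hX
    have hXint : Integrable (X 0) Pr := ((hL2 1 i).integrable (by norm_num)).abs
    have hXindep : Pairwise (Function.onFun (IndepFun · · Pr) X) := by
      intro j j' hjj'
      have h1 : IndepFun (e (j+1) i) (e (j'+1) i) Pr :=
        hindep.indepFun (i := ((j+1 : ℕ), i)) (j := ((j'+1 : ℕ), i)) (by simp [hjj'])
      exact h1.comp measurable_abs measurable_abs
    have hXident : ∀ j, IdentDistrib (X j) (X 0) Pr Pr := fun j =>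
      (hident (j+1) i 1 i).comp measurable_abs
    filter_upwards [strong_law_ae_real X hXint hXindep hXident] with ω hω
    set L : ℝ := ∫ x, X 0 x ∂Pr
    refine ⟨|L| + 1, by positivity, ?_⟩
    have hev : ∀ᶠ n : ℕ in atTop, (∑ j ∈ Finset.range n, X j ω) / n ≤ |L| + 1 :=
      hω.eventually (eventually_le_nhds (lt_of_le_of_lt (le_abs_self L) (lt_add_one _)))
    obtain ⟨N, hN⟩ := hev.exists_forall_of_atTop
    refine ⟨max N 1, fun n hn => ?_⟩
    have hn1 : (1 : ℕ) ≤ n := le_trans (le_max_right N 1) hn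
    have hnpos : (0 : ℝ) < n := by exact_mod_cast hn1
    have hsum : ∑ k ∈ Finset.Icc 1 n, |e k i ω| = ∑ j ∈ Finset.range n, X j ω := by
      rw [show Finset.Icc 1 n = Finset.Ico 1 (n+1) by rw [Finset.Ico_add_one_right_eq_Icc],
        Finset.sum_Ico_eq_sum_range]
      simp [hX, add_comm]
    rw [hsum]
    have := hN n (le_trans (le_max_left N 1) hn)
    calc ∑ j ∈ Finset.range n, X j ω = ((∑ j ∈ Finset.range n, X j ω) / n) * n := by
          field_simp
      _ ≤ (|L| + 1) * n := by
          apply mul_le_mul_of_nonneg_right this hnpos.le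
      _ = n * (|L| + 1) := mul_comm _ _
  rw [ae_iff] at hAE
  refine ⟨(toMeasurable Pr {ω | ¬ φ ω})ᶜ, (measurableSet_toMeasurable _ _).compl, ?_, ?_⟩
  · rw [measure_compl (measurableSet_toMeasurable _ _) (measure_ne_top _ _),
      measure_toMeasurable, hAE, measure_univ]
    norm_num
  intro ω hωA ε hε P
  have hφ : φ ω := by
    by_contra h
    exact hωA (subset_toMeasurable _ _ h)
  choose C hC0 N hN using hφ
  haveI : Nonempty (Fin m) := Fin.pos_iff_nonempty.mp hm
  set B : Fin m → ℝ := fun i => 2 * ‖ybar i P₀‖ + 2 * ‖ybar i P‖ + 1 with hB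
  have hB0 : ∀ i, 0 ≤ B i := fun i => by positivity
  set S : ℝ := ∑ i : Fin m, (B i + 2 * C i) with hSdef
  have hS0 : 0 ≤ S := Finset.sum_nonneg fun i _ => by
    have := hB0 i; have := hC0 i; linarith
  set η : ℝ := min 1 (m * ε / (2 * (S + 1))) with hηdef
  have hη : 0 < η := by
    apply lt_min one_pos
    have : (0:ℝ) < m := by exact_mod_cast hm
    positivity
  have hη1 : η ≤ 1 := min_le_left _ _
  have hcont : ∀ i : Fin m, ∃ d > (0:ℝ), ∀ P', dist P P' < d →
      dist (ybar i P) (ybar i P') < η := by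
    intro i
    obtain ⟨d, hd0, hd⟩ := Metric.continuous_iff.mp (hybar i) P η hη
    exact ⟨d, hd0, fun P' h => by
      have := hd P' (by rwa [dist_comm]); rwa [dist_comm] at this⟩
  choose d hd0 hd using hcont
  refine ⟨Finset.univ.inf' Finset.univ_nonempty d, ?_,
    1 + Finset.univ.sup N, fun n hn P' hPP' => ?_⟩
  · refine (Finset.lt_inf'_iff _).mpr ?_
    exact fun i _ => hd0 i
  have hn1 : 1 ≤ n := le_trans (Nat.le_add_right 1 _) hn
  have hnpos : (0:ℝ) < n := by exact_mod_cast hn1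
  have hmpos : (0:ℝ) < m := by exact_mod_cast hm
  have hNn : ∀ i : Fin m, N i ≤ n := fun i =>
    le_trans (le_trans (Finset.le_sup (Finset.mem_univ i)) (Nat.le_add_left _ 1)) hn
  have hdist : ∀ i : Fin m, dist (ybar i P) (ybar i P') < η := fun i =>
    hd i P' (lt_of_lt_of_le hPP' (Finset.inf'_le _ (Finset.mem_univ i)))
  -- key pointwise estimate
  have key : ∀ i : Fin m, ∀ k ∈ Finset.Icc 1 n,
      |((ybar i P₀ (sampleTime T hT n k) + e k i ω) - ybar i P (sampleTime T hT n k)) ^ 2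
        - ((ybar i P₀ (sampleTime T hT n k) + e k i ω) - ybar i P' (sampleTime T hT n k)) ^ 2|
      ≤ η * (B i + 2 * |e k i ω|) := by
    intro i k _
    set t := sampleTime T hT n k
    set a := ybar i P₀ t
    set b := ybar i P t
    set b' := ybar i P' t
    have hbb' : |b - b'| ≤ η := by
      have h1 : dist b b' ≤ dist (ybar i P) (ybar i P') :=
        ContinuousMap.dist_apply_le_dist t
      rw [Real.dist_eq] at h1
      exact le_trans h1 (hdist i).le
    have ha : |a| ≤ ‖ybar i P₀‖ := by
      rw [← Real.norm_eq_abs]; exact ContinuousMap.norm_coe_le_norm _ t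
    have hb : |b| ≤ ‖ybar i P‖ := by
      rw [← Real.norm_eq_abs]; exact ContinuousMap.norm_coe_le_norm _ t
    have hb' : |b'| ≤ ‖ybar i P‖ + 1 := by
      have : |b'| ≤ |b| + |b - b'| := by
        have := abs_sub_abs_le_abs_sub b' b
        rw [abs_sub_comm b' b] at this
        linarith
      linarith [hbb'.trans hη1]
    have hexp : ((a + e k i ω) - b) ^ 2 - ((a + e k i ω) - b') ^ 2
        = (b' - b) * (2 * (a + e k i ω) - b - b') := by ring
    rw [hexp, abs_mul]
    have h2 : |2 * (a + e k i ω) - b - b'| ≤ B i + 2 * |e k i ω| := by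
      have := abs_add_le a (e k i ω)
      have h3 : |2 * (a + e k i ω) - b - b'| ≤ 2 * |a + e k i ω| + |b| + |b'| := by
        calc |2 * (a + e k i ω) - b - b'| ≤ |2 * (a + e k i ω) - b| + |b'| := abs_sub _ _
          _ ≤ |2 * (a + e k i ω)| + |b| + |b'| := by linarith [abs_sub (2*(a + e k i ω)) b]
          _ = 2 * |a + e k i ω| + |b| + |b'| := by rw [abs_mul]; norm_num
      simp only [hB]
      linarith
    rw [abs_sub_comm] at hbb'
    exact mul_le_mul hbb' h2 (abs_nonneg _) hη.le
  have hJ : |lsCost m T hT ybar P₀ e n ω P - lsCost m T hT ybar P₀ e n ω P'|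
      ≤ η * n * S := by
    rw [lsCost, lsCost, ← Finset.sum_sub_distrib]
    refine le_trans (Finset.abs_sum_le_sum_abs _ _) ?_
    rw [hSdef, Finset.mul_sum]
    refine Finset.sum_le_sum fun i _ => ?_
    rw [← Finset.sum_sub_distrib]
    refine le_trans (Finset.abs_sum_le_sum_abs _ _) ?_
    calc ∑ k ∈ Finset.Icc 1 n, |_| ≤ ∑ k ∈ Finset.Icc 1 n, η * (B i + 2 * |e k i ω|) :=
          Finset.sum_le_sum (key i)
      _ = η * ((n : ℝ) * B i + 2 * ∑ k ∈ Finset.Icc 1 n, |e k i ω|) := by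
          rw [← Finset.mul_sum, Finset.sum_add_distrib, Finset.sum_const, nsmul_eq_mul,
            Nat.card_Icc, Nat.add_sub_cancel, Finset.mul_sum]
      _ ≤ η * ((n : ℝ) * B i + 2 * (n * C i)) := by
          have := hN i n (hNn i)
          nlinarith [hη.le]
      _ = η * ↑n * (B i + 2 * C i) := by ring
  rw [← mul_sub, abs_mul]
  have habs : |1 / ((m:ℝ) * n)| = 1 / ((m:ℝ) * n) := abs_of_pos (by positivity)
  rw [habs]
  calc 1 / ((m:ℝ) * n) * |lsCost m T hT ybar P₀ e n ω P - lsCost m T hT ybar P₀ e n ω P'|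
      ≤ 1 / ((m:ℝ) * n) * (η * n * S) := by
        apply mul_le_mul_of_nonneg_left hJ (by positivity)
    _ = η * S / m := by field_simp
    _ ≤ (m * ε / (2 * (S + 1))) * S / m := by
        gcongr
        exact min_le_right _ _
    _ < ε := by
        have h1 : (0:ℝ) < 2 * (S + 1) := by linarith
        rw [div_lt_iff₀ hmpos, div_mul_eq_mul_div, div_lt_iff₀ h1]
        nlinarith [mul_pos hmpos hε, mul_nonneg (mul_pos hmpos hε).le hS0]
end

section
/- Let (Q,d) be a compact separable metric space, P(Q) the Borel probability measures on Q with the Prohorov metric ρ, and (q_j)_{j∈ℕ} a dense sequence in Q. For M ∈ ℕ let P_M(Q) = {Σ_{j=1}^M p_j δ_{q_j} : p_j ∈ [0,1], Σ_{j=1}^M p_j = 1}, where δ_q is the Dirac measure at q. Fix n, m ∈ ℕ and real data 𝓎_{k,i}, k = 1,…,n, i = 1,…,m, and suppose given functions ȳ_{k,i} : P(Q) → ℝ and ȳ^N_{k,i} : P(Q) → ℝ, N ∈ ℕ, satisfying: (B1) for every N the map P ↦ J^N(P) := Σ_{i=1}^m Σ_{k=1}^n (𝓎_{k,i} − ȳ^N_{k,i}(P))²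 is continuous on (P(Q),ρ); (B2) for every P ∈ P(Q) and every sequence (P_M) in P(Q) with ρ(P_M,P) → 0, one has ȳ^N_{k,i}(P_M) → ȳ_{k,i}(P) as N,M → ∞ jointly, for all k,i; (B3) there is a constant C such that |ȳ_{k,i}(P)| ≤ C and |ȳ^N_{k,i}(P)| ≤ C for all N, P, k, i. Define J(P) = Σ_{i=1}^m Σ_{k=1}^n (𝓎_{k,i} − ȳ_{k,i}(P))². Then: (i) for every N and M there exists P̂^N_M ∈ P_M(Q) minimizing J^N over P_M(Q); and (ii) for any sequences N_l → ∞ and M_l → ∞, the sequence (P̂^{N_l}_{M_l}) has a subsequence converging in the Prohorov metric to some P* ∈ P(Q), and any such limit satisfies J(P*) = inf_{P ∈ P(Q)} J(P). -/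
open MeasureTheory Filter Set Metric TopologicalSpace

set_option linter.unusedSectionVars false
set_option maxHeartbeats 1000000

open scoped ENNReal NNReal

/-- `PMset qd M` is the set of probability measures on `Q` that are convex combinations
`Σ_{j=1}^M p_j δ_{q_j}` of the Dirac measures at the first `M` points of the sequence `qd`. -/
def PMset {Q : Type*} [MetricSpace Q] [MeasurableSpace Q] (qd : ℕ → Q) (M : ℕ) :
    Set (LevyProkhorov (ProbabilityMeasure Q)) :=
  {P | ∃ p : Fin M → ℝ, (∀ j, 0 ≤ p j ∧ p j ≤ 1) ∧ (∑ j, p j = 1) ∧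
    P.toMeasure = ∑ j : Fin M, ENNReal.ofReal (p j) • Measure.dirac (qd j)}

section Aux
variable {Q : Type*} [MetricSpace Q] [MeasurableSpace Q] [BorelSpace Q]

noncomputable def simplexMeasure (qd : ℕ → Q) (M : ℕ) (p : Fin M → ℝ) : Measure Q :=
  ∑ j : Fin M, ENNReal.ofReal (p j) • Measure.dirac (qd j)

lemma simplexMeasure_apply (qd : ℕ → Q) (M : ℕ) (p : Fin M → ℝ) {B : Set Q}
    (hB : MeasurableSet B) :
    simplexMeasure qd M p B = ∑ j : Fin M, ENNReal.ofReal (p j) * B.indicator 1 (qd j) := by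
  rw [simplexMeasure, Measure.finset_sum_apply]
  simp only [Measure.smul_apply, smul_eq_mul]
  exact Finset.sum_congr rfl fun j _ => by rw [Measure.dirac_apply' _ hB]

lemma simplexMeasure_isProb (qd : ℕ → Q) (M : ℕ) (p : Fin M → ℝ)
    (h0 : ∀ j, 0 ≤ p j) (h1 : ∑ j, p j = 1) :
    IsProbabilityMeasure (simplexMeasure qd M p) := by
  constructor
  rw [simplexMeasure_apply qd M p MeasurableSet.univ]
  simp only [indicator_univ, Pi.one_apply, mul_one]
  rw [← ENNReal.ofReal_sum_of_nonneg fun j _ => h0 j, h1, ENNReal.ofReal_one]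

noncomputable def simplexPM (qd : ℕ → Q) (M : ℕ) (p : Fin M → ℝ)
    (h0 : ∀ j, 0 ≤ p j) (h1 : ∑ j, p j = 1) : LevyProkhorov (ProbabilityMeasure Q) :=
  LevyProkhorov.ofMeasure
    ⟨simplexMeasure qd M p, simplexMeasure_isProb qd M p h0 h1⟩

lemma simplexPM_toMeasure (qd : ℕ → Q) (M : ℕ) (p : Fin M → ℝ)
    (h0 : ∀ j, 0 ≤ p j) (h1 : ∑ j, p j = 1) :
    (simplexPM qd M p h0 h1).toMeasure = simplexMeasure qd M p := rfl

lemma simplexPM_mem (qd : ℕ → Q) (M : ℕ) (p : Fin M → ℝ)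
    (h0 : ∀ j, 0 ≤ p j) (h1 : ∑ j, p j = 1) :
    simplexPM qd M p h0 h1 ∈ PMset qd M := by
  refine ⟨p, fun j => ⟨h0 j, ?_⟩, h1, rfl⟩
  calc p j ≤ ∑ i, p i := Finset.single_le_sum (fun i _ => h0 i) (Finset.mem_univ j)
  _ = 1 := h1

lemma mem_PMset_iff (qd : ℕ → Q) (M : ℕ) (P : LevyProkhorov (ProbabilityMeasure Q)) :
    P ∈ PMset qd M ↔ ∃ p : Fin M → ℝ, ∃ (h0 : ∀ j, 0 ≤ p j) (h1 : ∑ j, p j = 1),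
      P = simplexPM qd M p h0 h1 := by
  constructor
  · rintro ⟨p, hp01, hp1, hPm⟩
    refine ⟨p, fun j => (hp01 j).1, hp1, ?_⟩
    have : (P.toMeasure : Measure Q)
        = ((simplexPM qd M p (fun j => (hp01 j).1) hp1).toMeasure : Measure Q) := hPm
    exact LevyProkhorov.toMeasure_injective (ProbabilityMeasure.toMeasure_injective this)
  · rintro ⟨p, h0, h1, rfl⟩
    exact simplexPM_mem qd M p h0 h1

end Aux

section A2
variable {Q : Type*} [MetricSpace Q] [MeasurableSpace Q] [BorelSpace Q]

lemma simplexMeasure_edist_le (qd : ℕ → Q) (M : ℕ) (p p' : Fin M → ℝ)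
    [IsProbabilityMeasure (simplexMeasure qd M p)]
    [IsProbabilityMeasure (simplexMeasure qd M p')] :
    levyProkhorovEDist (simplexMeasure qd M p) (simplexMeasure qd M p')
      ≤ ENNReal.ofReal (∑ j, |p j - p' j|) := by
  apply levyProkhorovEDist_le_of_forall_le
  intro ε B hδε hεtop hB
  have hε0 : (0:ℝ≥0∞) < ε := lt_of_le_of_lt zero_le hδε
  have hεR : 0 < ε.toReal := ENNReal.toReal_pos hε0.ne' hεtop.ne
  have hBsub : B ⊆ thickening ε.toReal B := self_subset_thickening hεR B
  calc simplexMeasure qd M p B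
      = ∑ j : Fin M, ENNReal.ofReal (p j) * B.indicator 1 (qd j) :=
        simplexMeasure_apply qd M p hB
    _ ≤ ∑ j : Fin M, (ENNReal.ofReal (p' j) * B.indicator 1 (qd j)
          + ENNReal.ofReal |p j - p' j|) := by
        refine Finset.sum_le_sum fun j _ => ?_
        have h1 : p j ≤ p' j + |p j - p' j| := by
          have := abs_nonneg (p j - p' j); have := le_abs_self (p j - p' j); linarith
        have h2 : ENNReal.ofReal (p j) ≤ ENNReal.ofReal (p' j) + ENNReal.ofReal |p j - p' j| :=
          le_trans (ENNReal.ofReal_le_ofReal h1) ENNReal.ofReal_add_le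
        have hind : B.indicator (1 : Q → ℝ≥0∞) (qd j) ≤ 1 := by
          classical
          by_cases h : qd j ∈ B <;> simp [indicator, h]
        calc ENNReal.ofReal (p j) * B.indicator 1 (qd j)
            ≤ (ENNReal.ofReal (p' j) + ENNReal.ofReal |p j - p' j|) * B.indicator 1 (qd j) :=
              mul_le_mul_left h2 _
          _ = ENNReal.ofReal (p' j) * B.indicator 1 (qd j)
              + ENNReal.ofReal |p j - p' j| * B.indicator 1 (qd j) := by ring
          _ ≤ ENNReal.ofReal (p' j) * B.indicator 1 (qd j) + ENNReal.ofReal |p j - p' j| := by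
              gcongr
              exact le_trans (mul_le_mul_right hind _) (by simp)
    _ = simplexMeasure qd M p' B + ∑ j : Fin M, ENNReal.ofReal |p j - p' j| := by
        rw [Finset.sum_add_distrib, simplexMeasure_apply qd M p' hB]
    _ ≤ simplexMeasure qd M p' (thickening ε.toReal B) + ε := by
        refine add_le_add (measure_mono hBsub) (le_trans ?_ hδε.le)
        rw [← ENNReal.ofReal_sum_of_nonneg fun j _ => abs_nonneg _]

end A2

lemma simplexPM_edist_le {Q : Type*} [MetricSpace Q] [MeasurableSpace Q] [BorelSpace Q]
    (qd : ℕ → Q) (M : ℕ) (p p' : Fin M → ℝ)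
    (h0 : ∀ j, 0 ≤ p j) (h0' : ∀ j, 0 ≤ p' j)
    (h1 : ∑ j, p j = 1) (h1' : ∑ j, p' j = 1) :
    levyProkhorovEDist ((simplexPM qd M p h0 h1).toMeasure : Measure Q)
      ((simplexPM qd M p' h0' h1').toMeasure : Measure Q)
      ≤ ENNReal.ofReal (∑ j, |p j - p' j|) := by
  rw [simplexPM_toMeasure, simplexPM_toMeasure]
  haveI := simplexMeasure_isProb qd M p h0 h1
  haveI := simplexMeasure_isProb qd M p' h0' h1'
  exact simplexMeasure_edist_le qd M p p'

section B
variable {Q : Type*} [MetricSpace Q] [MeasurableSpace Q] [BorelSpace Q]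

lemma simplexPM_dist_le (qd : ℕ → Q) (M : ℕ) (p p' : Fin M → ℝ)
    (h0 : ∀ j, 0 ≤ p j) (h0' : ∀ j, 0 ≤ p' j)
    (h1 : ∑ j, p j = 1) (h1' : ∑ j, p' j = 1) :
    dist (simplexPM qd M p h0 h1) (simplexPM qd M p' h0' h1') ≤ ∑ j, |p j - p' j| := by
  rw [LevyProkhorov.dist_probabilityMeasure_def, levyProkhorovDist]
  exact ENNReal.toReal_le_of_le_ofReal
    (Finset.sum_nonneg fun j _ => abs_nonneg _)
    (simplexPM_edist_le qd M p p' h0 h0' h1 h1')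

lemma continuous_simplexPM (qd : ℕ → Q) (M : ℕ) :
    Continuous (fun a : {p : Fin M → ℝ // p ∈ stdSimplex ℝ (Fin M)} =>
      simplexPM qd M a.1 a.2.1 a.2.2) := by
  rw [Metric.continuous_iff]
  intro b ε hε
  refine ⟨ε / (M + 1), by positivity, fun a hab => ?_⟩
  have hle : ∀ j : Fin M, |a.1 j - b.1 j| ≤ dist a b := by
    intro j
    rw [← Real.dist_eq, Subtype.dist_eq]
    exact dist_le_pi_dist a.1 b.1 j
  calc dist (simplexPM qd M a.1 a.2.1 a.2.2) (simplexPM qd M b.1 b.2.1 b.2.2)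
      ≤ ∑ j, |a.1 j - b.1 j| := simplexPM_dist_le qd M a.1 b.1 _ _ _ _
    _ ≤ ∑ _j : Fin M, dist a b := Finset.sum_le_sum fun j _ => hle j
    _ = M * dist a b := by simp [Finset.sum_const, mul_comm]
    _ < ε := by
        have hM : (0:ℝ) ≤ M := Nat.cast_nonneg M
        calc (M:ℝ) * dist a b ≤ (M + 1) * dist a b := by
              have := dist_nonneg (x := a) (y := b); nlinarith
          _ < (M + 1) * (ε / (M + 1)) := by
              apply mul_lt_mul_of_pos_left hab; positivity
          _ = ε := by field_simp

lemma isCompact_PMset (qd : ℕ → Q) (M : ℕ) : IsCompact (PMset qd M) := by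
  haveI : CompactSpace {p : Fin M → ℝ // p ∈ stdSimplex ℝ (Fin M)} :=
    isCompact_iff_compactSpace.mp (isCompact_stdSimplex ℝ (Fin M))
  have h := isCompact_range (continuous_simplexPM qd M)
  convert h using 1
  ext P
  rw [mem_PMset_iff]
  constructor
  · rintro ⟨p, h0, h1, rfl⟩
    exact ⟨⟨p, h0, h1⟩, rfl⟩
  · rintro ⟨a, rfl⟩
    exact ⟨a.1, a.2.1, a.2.2, rfl⟩

lemma PMset_nonempty (qd : ℕ → Q) (M : ℕ) (hM : 1 ≤ M) : (PMset qd M).Nonempty := by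
  have hMpos : (0:ℝ) < M := by exact_mod_cast hM
  refine ⟨simplexPM qd M (fun _ => 1 / M) (fun j => by positivity) ?_, ?_⟩
  · rw [Finset.sum_const, Finset.card_univ, Fintype.card_fin, nsmul_eq_mul]
    field_simp
  · rw [mem_PMset_iff]; exact ⟨_, _, _, rfl⟩

lemma part_one (qd : ℕ → Q) (M : ℕ) (hM : 1 ≤ M)
    (f : LevyProkhorov (ProbabilityMeasure Q) → ℝ) (hf : Continuous f) :
    ∃ Phat ∈ PMset qd M, ∀ P' ∈ PMset qd M, f Phat ≤ f P' := by
  obtain ⟨x, hx, hmin⟩ := (isCompact_PMset qd M).exists_isMinOn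
    (PMset_nonempty qd M hM) hf.continuousOn
  exact ⟨x, hx, fun y hy => hmin hy⟩

end B
section C
variable {Q : Type*} [MetricSpace Q] [MeasurableSpace Q] [BorelSpace Q]

lemma PMset_mono (qd : ℕ → Q) {M M' : ℕ} (hMM : M ≤ M') : PMset qd M ⊆ PMset qd M' := by
  rintro P ⟨p, h01, h1, hm⟩
  classical
  set g : ℕ → ℝ := fun i => if h : i < M then p ⟨i, h⟩ else 0 with hg
  have hgj : ∀ j : Fin M, g (j : ℕ) = p j := fun j => by simp [hg, j.isLt]
  have hg0 : ∀ i, i ∉ Finset.range M → g i = 0 := fun i hi =>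
    dif_neg (fun h => hi (Finset.mem_range.mpr h))
  refine ⟨fun j => g (j : ℕ), fun j => ?_, ?_, ?_⟩
  · by_cases h : (j : ℕ) < M
    · simpa [hg, h] using h01 ⟨j, h⟩
    · simp [hg, h]
  · rw [Fin.sum_univ_eq_sum_range g M']
    rw [← Finset.sum_subset (Finset.range_subset_range.mpr hMM) (fun i _ hi => hg0 i hi)]
    rw [← Fin.sum_univ_eq_sum_range g M]
    rw [← h1]
    exact Finset.sum_congr rfl fun j _ => hgj j
  · rw [hm]
    have : ∀ (K : ℕ), ∑ j : Fin K, ENNReal.ofReal (g (j:ℕ)) • Measure.dirac (qd (j:ℕ))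
        = ∑ i ∈ Finset.range K, ENNReal.ofReal (g i) • Measure.dirac (qd i) := fun K =>
      Fin.sum_univ_eq_sum_range (fun i => ENNReal.ofReal (g i) • Measure.dirac (qd i)) K
    rw [this M']
    rw [← Finset.sum_subset (Finset.range_subset_range.mpr hMM)
      (fun i _ hi => by rw [hg0 i hi]; simp)]
    rw [← this M]
    exact (Finset.sum_congr rfl fun j _ => by rw [hgj j]).symm

lemma exists_PMset_close [CompactSpace Q] (qd : ℕ → Q) (hqd : DenseRange qd)
    (P : LevyProkhorov (ProbabilityMeasure Q)) {ε : ℝ} (hε : 0 < ε) :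
    ∃ M, ∃ P' ∈ PMset qd M, dist P' P < ε := by
  classical
  set r : ℝ := ε / 3 with hr
  have hrpos : 0 < r := by positivity
  -- finite cover by balls of radius r
  have hcover : univ ⊆ ⋃ j, ball (qd j) r := by
    intro x _
    obtain ⟨j, hj⟩ := Metric.denseRange_iff.mp hqd x r hrpos
    exact mem_iUnion.mpr ⟨j, by simpa [dist_comm] using hj⟩
  obtain ⟨t, ht⟩ := isCompact_univ.elim_finite_subcover
    (fun j => ball (qd j) r) (fun j => isOpen_ball) hcover
  set M : ℕ := t.sup id + 1 with hM
  have huniv : ⋃ j ∈ Finset.range M, ball (qd j) r = univ := by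
    apply eq_univ_of_univ_subset
    refine ht.trans ?_
    refine iUnion₂_subset fun j hj => ?_
    exact subset_iUnion₂ (s := fun j _ => ball (qd j) r) j
      (Finset.mem_range.mpr (Nat.lt_succ_of_le (Finset.le_sup (f := id) hj)))
  set A : ℕ → Set Q := disjointed (fun j => ball (qd j) r) with hA
  have hAmeas : ∀ j, MeasurableSet (A j) :=
    MeasurableSet.disjointed fun j => measurableSet_ball
  have hAdisj : Pairwise (Function.onFun Disjoint A) := disjoint_disjointed _
  have hAsub : ∀ j, A j ⊆ ball (qd j) r := disjointed_subset _
  have hAuniv : ⋃ j ∈ Finset.range M, A j = univ := by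
    have h1 : ⋃ j ∈ Finset.range M, A j = partialSups A (t.sup id) := by
      rw [partialSups_eq_biUnion_range]
    have h2 : ⋃ j ∈ Finset.range M, ball (qd j) r
        = partialSups (fun j => ball (qd j) r) (t.sup id) := by
      rw [partialSups_eq_biUnion_range]
    rw [h1, hA, partialSups_disjointed, ← h2, huniv]
  set p : Fin M → ℝ := fun j => ((P.toMeasure : Measure Q) (A (j : ℕ))).toReal with hp
  have hfin : ∀ j : Fin M, (P.toMeasure : Measure Q) (A (j : ℕ)) ≠ ∞ := fun j => measure_ne_top _ _
  have hofReal : ∀ j : Fin M, ENNReal.ofReal (p j) = (P.toMeasure : Measure Q) (A (j : ℕ)) := fun j =>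
    ENNReal.ofReal_toReal (hfin j)
  have h0 : ∀ j, 0 ≤ p j := fun j => ENNReal.toReal_nonneg
  have hsum : ∑ j : Fin M, (P.toMeasure : Measure Q) (A (j : ℕ)) = 1 := by
    rw [Fin.sum_univ_eq_sum_range (fun i => (P.toMeasure : Measure Q) (A i)) M]
    rw [← measure_biUnion_finset
      (fun i _ j _ hij => hAdisj hij) (fun i _ => hAmeas i)]
    rw [hAuniv]
    exact measure_univ
  have h1 : ∑ j, p j = 1 := by
    rw [hp, ← ENNReal.toReal_sum fun j _ => hfin j, hsum, ENNReal.toReal_one]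
  refine ⟨M, simplexPM qd M p h0 h1, simplexPM_mem qd M p h0 h1, ?_⟩
  -- distance estimate
  have hedist : levyProkhorovEDist ((simplexPM qd M p h0 h1).toMeasure : Measure Q) (P.toMeasure : Measure Q)
      ≤ ENNReal.ofReal r := by
    rw [simplexPM_toMeasure]
    haveI := simplexMeasure_isProb qd M p h0 h1
    apply levyProkhorovEDist_le_of_forall_le
    intro δ B hδ hδtop hB
    have hrδ : r < δ.toReal :=
      (ENNReal.ofReal_lt_iff_lt_toReal hrpos.le hδtop.ne).mp hδ
    rw [simplexMeasure_apply qd M p hB]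
    have hterm : ∀ j : Fin M,
        ENNReal.ofReal (p j) * B.indicator 1 (qd (j : ℕ))
          = if qd (j : ℕ) ∈ B then (P.toMeasure : Measure Q) (A (j : ℕ)) else 0 := by
      intro j
      by_cases h : qd (j : ℕ) ∈ B <;> simp [h, hofReal j]
    rw [Finset.sum_congr rfl fun j _ => hterm j, ← Finset.sum_filter]
    rw [← measure_biUnion_finset (f := fun a : Fin M => A (a : ℕ))
      (fun i _ j _ hij => hAdisj (fun h => hij (Fin.val_injective h)))
      (fun i _ => hAmeas (i : ℕ))]
    refine le_trans (measure_mono ?_) le_self_add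
    refine iUnion₂_subset fun j hj => ?_
    have hjB : qd (j : ℕ) ∈ B := (Finset.mem_filter.mp hj).2
    intro x hx
    have hxball : x ∈ ball (qd (j : ℕ)) r := hAsub _ hx
    exact mem_thickening_iff.mpr ⟨qd (j : ℕ), hjB, lt_trans (mem_ball.mp hxball) hrδ⟩
  have hdist : dist (simplexPM qd M p h0 h1) P ≤ r := by
    rw [LevyProkhorov.dist_probabilityMeasure_def, levyProkhorovDist]
    exact ENNReal.toReal_le_of_le_ofReal hrpos.le hedist
  calc dist (simplexPM qd M p h0 h1) P ≤ r := hdist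
    _ < ε := by rw [hr]; linarith


end C
section Seq
variable {Q : Type*} [MetricSpace Q] [MeasurableSpace Q] [BorelSpace Q] [CompactSpace Q]
  [TopologicalSpace.SeparableSpace Q]

/-- The countable family of finite unions of balls with centers in the dense sequence
and rational radii. -/
def ratUnion (qd : ℕ → Q) (t : Finset (ℕ × ℚ)) : Set Q :=
  ⋃ x ∈ t, ball (qd x.1) (x.2 : ℝ)

lemma isOpen_ratUnion (qd : ℕ → Q) (t : Finset (ℕ × ℚ)) : IsOpen (ratUnion qd t) :=
  isOpen_biUnion fun _ _ => isOpen_ball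

lemma ratUnion_union (qd : ℕ → Q) (t s : Finset (ℕ × ℚ)) :
    ratUnion qd (t ∪ s) = ratUnion qd t ∪ ratUnion qd s := by
  classical
  exact Finset.set_biUnion_union t s _

/-- The main covering lemma: a compact set inside an open set can be covered by a finite
union of rational balls staying inside the open set and inside the `δ`-thickening. -/
lemma exists_ratUnion_cover (qd : ℕ → Q) (hqd : DenseRange qd)
    (K : Set Q) (hK : IsCompact K) (V : Set Q) (hV : IsOpen V) (hKV : K ⊆ V)
    {δ : ℝ} (hδ : 0 < δ) :
    ∃ t : Finset (ℕ × ℚ), K ⊆ ratUnion qd t ∧ ratUnion qd t ⊆ V ∩ thickening δ K := by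
  classical
  have hx : ∀ x : K, ∃ jq : ℕ × ℚ, x.1 ∈ ball (qd jq.1) (jq.2 : ℝ) ∧
      ball (qd jq.1) (jq.2 : ℝ) ⊆ V ∩ thickening δ K := by
    rintro ⟨x, hxK⟩
    obtain ⟨s, hs, hsV⟩ := Metric.isOpen_iff.mp hV x (hKV hxK)
    set ρ : ℝ := min s δ / 2 with hρ
    have hρpos : 0 < ρ := by positivity
    obtain ⟨j, hj⟩ := Metric.denseRange_iff.mp hqd x (ρ / 2) (by positivity)
    obtain ⟨q, hq1, hq2⟩ := exists_rat_btwn (show ρ / 2 < ρ by linarith)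
    refine ⟨(j, q), ?_, ?_⟩
    · simp only [mem_ball]
      calc dist x (qd j) < ρ / 2 := hj
        _ < q := hq1
    · intro z hz
      have hzx : dist z x < min s δ := by
        calc dist z x ≤ dist z (qd j) + dist (qd j) x := dist_triangle _ _ _
          _ < q + ρ / 2 := by
              have := mem_ball.mp hz
              have : dist (qd j) x < ρ / 2 := by rwa [dist_comm]
              have hzq := mem_ball.mp hz
              linarith
          _ < ρ + ρ := by linarith
          _ = min s δ := by rw [hρ]; ring
      constructor
      · exact hsV (mem_ball.mpr (lt_of_lt_of_le hzx (min_le_left _ _)))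
      · exact mem_thickening_iff.mpr ⟨x, hxK, lt_of_lt_of_le hzx (min_le_right _ _)⟩
  choose F hF1 hF2 using hx
  have hcover : K ⊆ ⋃ x : K, ball (qd (F x).1) ((F x).2 : ℝ) := fun x hx =>
    mem_iUnion.mpr ⟨⟨x, hx⟩, hF1 ⟨x, hx⟩⟩
  obtain ⟨s, hs⟩ := hK.elim_finite_subcover (fun x : K => ball (qd (F x).1) ((F x).2 : ℝ))
    (fun _ => isOpen_ball) hcover
  refine ⟨s.image F, ?_, ?_⟩
  · intro x hxK
    obtain ⟨i, hi⟩ := mem_iUnion₂.mp (hs hxK)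
    exact mem_iUnion₂.mpr ⟨F i, Finset.mem_image_of_mem F hi.1, hi.2⟩
  · refine iUnion₂_subset fun jq hjq => ?_
    obtain ⟨i, _, rfl⟩ := Finset.mem_image.mp hjq
    exact hF2 i

lemma exists_ratUnion_univ (qd : ℕ → Q) (hqd : DenseRange qd) :
    ∃ t : Finset (ℕ × ℚ), ratUnion qd t = univ := by
  obtain ⟨t, h1, _⟩ := exists_ratUnion_cover qd hqd univ isCompact_univ univ isOpen_univ
    subset_rfl (δ := 1) one_pos
  exact ⟨t, eq_univ_of_univ_subset h1⟩

/-- Sequential compactness of the Lévy-Prokhorov space of probability measures on a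
compact separable metric space. -/
lemma exists_conv_subseq (qd : ℕ → Q) (hqd : DenseRange qd)
    (μ : ℕ → LevyProkhorov (ProbabilityMeasure Q)) :
    ∃ φ : ℕ → ℕ, StrictMono φ ∧ ∃ Pstar : LevyProkhorov (ProbabilityMeasure Q),
      Tendsto (fun l => μ (φ l)) atTop (nhds Pstar) := by
  classical
  set ν : ℕ → ProbabilityMeasure Q := fun l => (μ l).toMeasure
    with hν
  haveI : CompactSpace (Icc (0:ℝ≥0) 1) := isCompact_iff_compactSpace.mp isCompact_Icc
  -- diagonal extraction
  set F : ℕ → (Finset (ℕ × ℚ) → Icc (0:ℝ≥0) 1) := fun l t =>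
    ⟨ν l (ratUnion qd t), zero_le, (ν l).apply_le_one _⟩ with hF
  obtain ⟨g, -, φ, hφ, hconv⟩ := isCompact_univ.tendsto_subseq (x := F) (fun n => mem_univ _)
  set L : Finset (ℕ × ℚ) → ℝ≥0 := fun t => (g t : ℝ≥0) with hLdef
  have hL : ∀ t, Tendsto (fun l => ν (φ l) (ratUnion qd t)) atTop (nhds (L t)) := by
    intro t
    have := tendsto_pi_nhds.mp hconv t
    exact (continuous_subtype_val.tendsto (g t)).comp this
  have hL1 : ∀ t, L t ≤ 1 := fun t => (g t).2.2
  -- properties of L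
  have hLmono : ∀ t s, ratUnion qd t ⊆ ratUnion qd s → L t ≤ L s := by
    intro t s hts
    exact le_of_tendsto_of_tendsto' (hL t) (hL s)
      (fun l => (ν (φ l)).apply_mono hts)
  have hLsubadd : ∀ t s, L (t ∪ s) ≤ L t + L s := by
    intro t s
    refine le_of_tendsto_of_tendsto' (hL (t ∪ s)) ((hL t).add (hL s)) (fun l => ?_)
    have h1 : (ν (φ l)).toMeasure (ratUnion qd (t ∪ s))
        ≤ (ν (φ l)).toMeasure (ratUnion qd t) + (ν (φ l)).toMeasure (ratUnion qd s) := by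
      rw [ratUnion_union]
      exact measure_union_le _ _
    have := ENNReal.toNNReal_mono (by finiteness) h1
    rwa [ENNReal.toNNReal_add (by finiteness) (by finiteness)] at this
  have hLadd : ∀ t s, Disjoint (ratUnion qd t) (ratUnion qd s) → L t + L s ≤ L (t ∪ s) := by
    intro t s hdisj
    refine le_of_tendsto_of_tendsto' ((hL t).add (hL s)) (hL (t ∪ s)) (fun l => ?_)
    have h1 : (ν (φ l)).toMeasure (ratUnion qd t) + (ν (φ l)).toMeasure (ratUnion qd s)
        = (ν (φ l)).toMeasure (ratUnion qd (t ∪ s)) := by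
      rw [ratUnion_union]
      exact (measure_union hdisj (isOpen_ratUnion qd s).measurableSet).symm
    have := le_of_eq h1
    have h2 := ENNReal.toNNReal_mono (by finiteness) this
    rwa [ENNReal.toNNReal_add (by finiteness) (by finiteness)] at h2
  -- the content
  obtain ⟨tU, htU⟩ := exists_ratUnion_univ qd hqd
  set lam : Compacts Q → ℝ≥0∞ :=
    fun K => ⨅ (t : {t : Finset (ℕ × ℚ) // (K : Set Q) ⊆ ratUnion qd t}), (L t.1 : ℝ≥0∞)
    with hlam
  have hNE : ∀ K : Compacts Q, Nonempty {t : Finset (ℕ × ℚ) // (K : Set Q) ⊆ ratUnion qd t} :=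
    fun K => ⟨⟨tU, htU ▸ subset_univ _⟩⟩
  have hlam_le : ∀ (K : Compacts Q) (t : Finset (ℕ × ℚ)), (K : Set Q) ⊆ ratUnion qd t → lam K ≤ (L t : ℝ≥0∞) :=
    fun K t h => iInf_le_of_le ⟨t, h⟩ le_rfl
  have hlam1 : ∀ K : Compacts Q, lam K ≤ 1 := fun K =>
    le_trans (hlam_le K tU (htU ▸ subset_univ _)) (by exact_mod_cast hL1 tU)
  have hlam_ne_top : ∀ K : Compacts Q, lam K ≠ ∞ := fun K => (lt_of_le_of_lt (hlam1 K) ENNReal.one_lt_top).ne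
  have hlam_mono : ∀ K₁ K₂ : Compacts Q, (K₁ : Set Q) ⊆ K₂ → lam K₁ ≤ lam K₂ := by
    intro K₁ K₂ h
    haveI := hNE K₂
    refine le_iInf fun t => hlam_le K₁ t.1 (h.trans t.2)
  have hlam_subadd : ∀ K₁ K₂ : Compacts Q, lam (K₁ ⊔ K₂) ≤ lam K₁ + lam K₂ := by
    intro K₁ K₂
    haveI := hNE K₁; haveI := hNE K₂
    rw [hlam]
    simp only
    rw [ENNReal.iInf_add]
    refine le_iInf fun t₁ => ?_
    rw [ENNReal.add_iInf]
    refine le_iInf fun t₂ => ?_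
    refine le_trans (hlam_le (K₁ ⊔ K₂) (t₁.1 ∪ t₂.1) ?_) ?_
    · rw [ratUnion_union]
      exact union_subset_union t₁.2 t₂.2
    · rw [← ENNReal.coe_add]
      exact_mod_cast hLsubadd t₁.1 t₂.1
  have hlam_disj : ∀ K₁ K₂ : Compacts Q, Disjoint (K₁ : Set Q) (K₂ : Set Q) →
      lam (K₁ ⊔ K₂) = lam K₁ + lam K₂ := by
    intro K₁ K₂ hdisj
    refine le_antisymm (hlam_subadd K₁ K₂) ?_
    obtain ⟨δ, hδpos, hδ⟩ := hdisj.exists_thickenings K₁.isCompact K₂.isCompact.isClosed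
    haveI := hNE (K₁ ⊔ K₂)
    refine le_iInf fun t => ?_
    have hsub : (K₁ : Set Q) ⊆ ratUnion qd t :=
      (subset_union_left.trans (le_of_eq rfl)).trans t.2
    have hsub2 : (K₂ : Set Q) ⊆ ratUnion qd t := subset_union_right.trans t.2
    obtain ⟨t₁, ht₁a, ht₁b⟩ := exists_ratUnion_cover qd hqd K₁ K₁.isCompact
      (ratUnion qd t) (isOpen_ratUnion qd t) hsub hδpos
    obtain ⟨t₂, ht₂a, ht₂b⟩ := exists_ratUnion_cover qd hqd K₂ K₂.isCompact
      (ratUnion qd t) (isOpen_ratUnion qd t) hsub2 hδpos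
    have hUdisj : Disjoint (ratUnion qd t₁) (ratUnion qd t₂) :=
      hδ.mono (ht₁b.trans inter_subset_right) (ht₂b.trans inter_subset_right)
    calc lam K₁ + lam K₂ ≤ (L t₁ : ℝ≥0∞) + (L t₂ : ℝ≥0∞) :=
          add_le_add (hlam_le K₁ t₁ ht₁a) (hlam_le K₂ t₂ ht₂a)
      _ = ((L t₁ + L t₂ : ℝ≥0) : ℝ≥0∞) := by rw [ENNReal.coe_add]
      _ ≤ (L (t₁ ∪ t₂) : ℝ≥0∞) := by exact_mod_cast hLadd t₁ t₂ hUdisj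
      _ ≤ (L t.1 : ℝ≥0∞) := by
          exact_mod_cast hLmono (t₁ ∪ t₂) t.1
            (by rw [ratUnion_union]
                exact union_subset (ht₁b.trans inter_subset_left)
                  (ht₂b.trans inter_subset_left))
  have hsup_disj : ∀ K₁ K₂ : Compacts Q, Disjoint (K₁ : Set Q) (K₂ : Set Q) →
      (lam (K₁ ⊔ K₂)).toNNReal = (lam K₁).toNNReal + (lam K₂).toNNReal := by
    intro K₁ K₂ hdisj
    rw [hlam_disj K₁ K₂ hdisj, ENNReal.toNNReal_add (hlam_ne_top K₁) (hlam_ne_top K₂)]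
  have hsup_le : ∀ K₁ K₂ : Compacts Q,
      (lam (K₁ ⊔ K₂)).toNNReal ≤ (lam K₁).toNNReal + (lam K₂).toNNReal := by
    intro K₁ K₂
    rw [← ENNReal.toNNReal_add (hlam_ne_top K₁) (hlam_ne_top K₂)]
    exact ENNReal.toNNReal_mono
      (ENNReal.add_ne_top.mpr ⟨hlam_ne_top K₁, hlam_ne_top K₂⟩) (hlam_subadd K₁ K₂)
  set C : Content Q :=
    { toFun := fun K => (lam K).toNNReal
      mono' := fun K₁ K₂ h => ENNReal.toNNReal_mono (hlam_ne_top K₂) (hlam_mono K₁ K₂ h)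
      sup_disjoint' := fun K₁ K₂ hdisj _ _ => hsup_disj K₁ K₂ hdisj
      sup_le' := fun K₁ K₂ => hsup_le K₁ K₂ } with hC
  have hCcoe : ∀ K : Compacts Q, (C K : ℝ≥0∞) = lam K := fun K => by
    rw [hC]
    exact ENNReal.coe_toNNReal (hlam_ne_top K)
  -- total mass one
  have hlam_univ : lam ⟨univ, isCompact_univ⟩ = 1 := by
    refine le_antisymm (hlam1 _) (le_iInf fun t => ?_)
    have htuniv : ratUnion qd t.1 = univ := eq_univ_of_univ_subset t.2
    have hLt1 : L t.1 = 1 := by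
      refine tendsto_nhds_unique (hL t.1) ?_
      simp only [htuniv, ProbabilityMeasure.coeFn_univ]
      exact tendsto_const_nhds
    rw [hLt1]
    exact le_of_eq (by norm_num)
  have hμuniv : C.measure univ = 1 := by
    rw [C.measure_apply MeasurableSet.univ, C.outerMeasure_of_isOpen univ isOpen_univ]
    refine le_antisymm ?_ ?_
    · refine le_trans (C.innerContent_le ⟨univ, isOpen_univ⟩ ⟨univ, isCompact_univ⟩
        subset_rfl) ?_
      rw [hCcoe, hlam_univ]
    · refine le_trans ?_ (C.le_innerContent ⟨univ, isCompact_univ⟩ ⟨univ, isOpen_univ⟩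
        subset_rfl)
      rw [hCcoe, hlam_univ]
  haveI hPM : IsProbabilityMeasure C.measure := ⟨hμuniv⟩
  set Pstar : ProbabilityMeasure Q := ⟨C.measure, hPM⟩ with hPstar
  have h_opens : ∀ G, IsOpen G → Pstar G ≤ (atTop : Filter ℕ).liminf (fun i => ν (φ i) G) := by
    intro G hG
    rw [← ENNReal.coe_le_coe, ProbabilityMeasure.ennreal_coeFn_eq_coeFn_toMeasure]
    have hmeq : Pstar.toMeasure G = C.innerContent ⟨G, hG⟩ := by
      rw [hPstar]
      exact (C.measure_apply hG.measurableSet).trans (C.outerMeasure_of_isOpen G hG)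
    rw [hmeq]
    refine iSup₂_le fun K hK => ?_
    obtain ⟨t, hta, htb⟩ := exists_ratUnion_cover qd hqd K K.isCompact G hG hK one_pos
    have hLt : (L t : ℝ≥0∞) ≤ (((atTop : Filter ℕ).liminf (fun i => ν (φ i) G) : ℝ≥0) : ℝ≥0∞) := by
      rw [ENNReal.coe_le_coe]
      have hrw : L t = (atTop : Filter ℕ).liminf (fun i => ν (φ i) (ratUnion qd t)) := ((hL t).liminf_eq).symm
      rw [hrw]
      refine liminf_le_liminf (Eventually.of_forall fun (i : ℕ) =>
        (ν (φ i)).apply_mono (htb.trans inter_subset_left)) ?_ ?_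
      · exact isBoundedUnder_of ⟨0, fun (i : ℕ) => zero_le⟩
      · exact IsBoundedUnder.isCoboundedUnder_ge
          (isBoundedUnder_of ⟨1, fun (i : ℕ) => (ν (φ i)).apply_le_one _⟩)
    refine le_trans ?_ hLt
    rw [hCcoe]
    exact hlam_le K t hta
  have hten : Tendsto (fun i => ν (φ i)) atTop (nhds Pstar) :=
    tendsto_of_forall_isOpen_le_liminf h_opens
  refine ⟨φ, hφ, LevyProkhorov.probabilityMeasureHomeomorph Pstar, ?_⟩
  exact (LevyProkhorov.probabilityMeasureHomeomorph.continuous.tendsto Pstar).comp hten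

end Seq

/-- Existence of approximating finite-dimensional least-squares estimators and their
subsequential convergence to a minimizer of the limit problem: under hypotheses (B1)–(B3),
for each `N` and `M ≥ 1` the cost `J^N` has a minimizer `P̂^N_M` over `P_M(Q)`, and along any
`N_l → ∞`, `M_l → ∞`, any sequence of such minimizers has a Prohorov-convergent subsequence,
and every subsequential limit `P*` minimizes `J` over all of `P(Q)`. -/
theorem approx_estimators_exist_and_converge
    {Q : Type*} [MetricSpace Q] [CompactSpace Q] [TopologicalSpace.SeparableSpace Q]
    [MeasurableSpace Q] [BorelSpace Q]
    (qd : ℕ → Q) (hqd : DenseRange qd)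
    (n m : ℕ) (y : Fin n → Fin m → ℝ)
    (ybarN : ℕ → Fin n → Fin m → LevyProkhorov (ProbabilityMeasure Q) → ℝ)
    (ybar : Fin n → Fin m → LevyProkhorov (ProbabilityMeasure Q) → ℝ)
    (hB1 : ∀ N, Continuous (fun P : LevyProkhorov (ProbabilityMeasure Q) =>
      ∑ i : Fin m, ∑ k : Fin n, (y k i - ybarN N k i P) ^ 2))
    (hB2 : ∀ (P : LevyProkhorov (ProbabilityMeasure Q))
      (Ps : ℕ → LevyProkhorov (ProbabilityMeasure Q)), Tendsto Ps atTop (nhds P) →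
      ∀ k i, Tendsto (fun NM : ℕ × ℕ => ybarN NM.1 k i (Ps NM.2)) (atTop ×ˢ atTop)
        (nhds (ybar k i P)))
    (hB3 : ∃ C : ℝ, (∀ k i P, |ybar k i P| ≤ C) ∧ (∀ N k i P, |ybarN N k i P| ≤ C)) :
    (∀ N M, 1 ≤ M → ∃ Phat ∈ PMset qd M, ∀ P' ∈ PMset qd M,
        (∑ i : Fin m, ∑ k : Fin n, (y k i - ybarN N k i Phat) ^ 2)
          ≤ ∑ i : Fin m, ∑ k : Fin n, (y k i - ybarN N k i P') ^ 2) ∧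
    (∀ (Nl Ml : ℕ → ℕ), Tendsto Nl atTop atTop → Tendsto Ml atTop atTop →
      ∀ Ph : ℕ → LevyProkhorov (ProbabilityMeasure Q),
        (∀ l, Ph l ∈ PMset qd (Ml l) ∧ ∀ P' ∈ PMset qd (Ml l),
          (∑ i : Fin m, ∑ k : Fin n, (y k i - ybarN (Nl l) k i (Ph l)) ^ 2)
            ≤ ∑ i : Fin m, ∑ k : Fin n, (y k i - ybarN (Nl l) k i P') ^ 2) →
        (∃ φ : ℕ → ℕ, StrictMono φ ∧ ∃ Pstar : LevyProkhorov (ProbabilityMeasure Q),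
          Tendsto (fun l => Ph (φ l)) atTop (nhds Pstar)) ∧
        (∀ φ : ℕ → ℕ, StrictMono φ →
          ∀ Pstar : LevyProkhorov (ProbabilityMeasure Q),
            Tendsto (fun l => Ph (φ l)) atTop (nhds Pstar) →
            ∀ P' : LevyProkhorov (ProbabilityMeasure Q),
              (∑ i : Fin m, ∑ k : Fin n, (y k i - ybar k i Pstar) ^ 2)
                ≤ ∑ i : Fin m, ∑ k : Fin n, (y k i - ybar k i P') ^ 2)) := by
  classical
  refine ⟨fun N M hM => part_one qd M hM _ (hB1 N), ?_⟩
  intro Nl Ml hNl hMl Ph hPh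
  refine ⟨exists_conv_subseq qd hqd Ph, ?_⟩
  intro φ hφ Pstar hPstar P'
  have hprod : Tendsto (fun l => (Nl (φ l), l)) atTop ((atTop : Filter ℕ) ×ˢ (atTop : Filter ℕ)) :=
    (hNl.comp hφ.tendsto_atTop).prodMk tendsto_id
  have key : ∀ (Ps : ℕ → LevyProkhorov (ProbabilityMeasure Q))
      (P : LevyProkhorov (ProbabilityMeasure Q)), Tendsto Ps atTop (nhds P) →
      Tendsto (fun l => ∑ i : Fin m, ∑ k : Fin n, (y k i - ybarN (Nl (φ l)) k i (Ps l)) ^ 2)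
        atTop (nhds (∑ i : Fin m, ∑ k : Fin n, (y k i - ybar k i P) ^ 2)) := by
    intro Ps P hPs
    refine tendsto_finset_sum _ fun i _ => tendsto_finset_sum _ fun k _ => ?_
    have h2 : Tendsto (fun l => ybarN (Nl (φ l)) k i (Ps l)) atTop (nhds (ybar k i P)) :=
      (hB2 P Ps hPs k i).comp hprod
    exact (tendsto_const_nhds.sub h2).pow 2
  -- construct a sequence in the `PMset`s converging to `P'`
  have hex : ∀ k : ℕ, ∃ (Mk : ℕ) (Pk : LevyProkhorov (ProbabilityMeasure Q)),
      Pk ∈ PMset qd Mk ∧ dist Pk P' < 1 / ((k : ℝ) + 1) := by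
    intro k
    obtain ⟨M, P'', hmem, hd⟩ := exists_PMset_close qd hqd P'
      (show (0:ℝ) < 1 / ((k : ℝ) + 1) by positivity)
    exact ⟨M, P'', hmem, hd⟩
  choose Mk Pk hPkmem hPkdist using hex
  set c : ℕ → ℕ := fun l => Nat.findGreatest (fun k => Mk k ≤ Ml (φ l)) l with hc
  set Ps : ℕ → LevyProkhorov (ProbabilityMeasure Q) := fun l =>
    if h : ∃ k ≤ l, Mk k ≤ Ml (φ l) then Pk (c l) else Ph (φ l) with hPs
  have hPsmem : ∀ l, Ps l ∈ PMset qd (Ml (φ l)) := by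
    intro l
    by_cases h : ∃ k ≤ l, Mk k ≤ Ml (φ l)
    · simp only [hPs, dif_pos h]
      obtain ⟨k, hkl, hk⟩ := h
      have hcl : Mk (c l) ≤ Ml (φ l) := Nat.findGreatest_spec (P := fun k => Mk k ≤ Ml (φ l)) hkl hk
      exact PMset_mono qd hcl (hPkmem (c l))
    · simp only [hPs, dif_neg h]
      exact (hPh (φ l)).1
  have hPstend : Tendsto Ps atTop (nhds P') := by
    rw [Metric.tendsto_nhds]
    intro ε hε
    obtain ⟨k₀, hk₀⟩ := exists_nat_one_div_lt hε
    have hev : ∀ᶠ l in atTop, Mk k₀ ≤ Ml (φ l) :=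
      (hMl.comp hφ.tendsto_atTop).eventually_ge_atTop (Mk k₀)
    have hev2 : ∀ᶠ l in atTop, k₀ ≤ l := eventually_ge_atTop k₀
    filter_upwards [hev, hev2] with l h1 h2
    have hexl : ∃ k ≤ l, Mk k ≤ Ml (φ l) := ⟨k₀, h2, h1⟩
    have hclk : k₀ ≤ c l := Nat.le_findGreatest (P := fun k => Mk k ≤ Ml (φ l)) h2 h1
    simp only [hPs, dif_pos hexl]
    calc dist (Pk (c l)) P' < 1 / ((c l : ℝ) + 1) := hPkdist (c l)
      _ ≤ 1 / ((k₀ : ℝ) + 1) := by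
          apply one_div_le_one_div_of_le (by positivity)
          have : (k₀ : ℝ) ≤ (c l : ℝ) := by exact_mod_cast hclk
          linarith
      _ < ε := hk₀
  have h1 := key (fun l => Ph (φ l)) Pstar hPstar
  have h2 := key Ps P' hPstend
  exact le_of_tendsto_of_tendsto' h1 h2 (fun l => (hPh (φ l)).2 (Ps l) (hPsmem l))
end
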